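/- arXiv:1211.1867 — 2 statements merged into one kernel-verified Lean document; each statement's English description precedes it below -/
import Mathlib

section
/- Division theorem in A_n[t]: Let P_1,...,P_r ∈ A_n[t] be nonzero, and define the partition Δ_1 = exp(P_1)+ℕ^{2n+1}, Δ_i = (exp(P_i)+ℕ^{2n+1}) \ ∪_{j<i} Δ_j for i = 2,...,r, and Δ̄ = ℕ^{2n+1} \ ∪_i Δ_i, where exp denotes the ⊲-leading exponent. Then for every H ∈ A_n[t] there exists a unique (Q_1,...,Q_r,R) ∈ A_n[t]^{r+1} such that H = Q_1P_1 + ... + Q_rP_r + R, with exp(P_i) + N(Q_i) ⊆ Δ_i for each i, and N(R) ⊆ Δ̄. -/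
/-- The index set of normal monomials `x^α D^β` of the Weyl algebra `A_n(K)`. -/
abbrev WMon (n : ℕ) := (Fin n → ℕ) × (Fin n → ℕ)

/-- The normal monomial `x^α D^β`. -/
def wmono {A : Type*} [Ring A] {n : ℕ} (x D : Fin n → A) (ab : WMon n) : A :=
  (List.ofFn fun i => x i ^ ab.1 i).prod * (List.ofFn fun i => D i ^ ab.2 i).prod

/-- A presentation of the Weyl algebra `A_n(K)`: an associative `K`-algebra `A` with
generators `x_i, D_i` satisfying `[x_i,x_j] = [D_i,D_j] = 0`, `[D_i,x_j] = δ_{ij}`,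
such that the normal monomials `x^α D^β` form a `K`-basis. -/
structure WeylData (K : Type*) [Field K] (n : ℕ) (A : Type*) [Ring A] [Algebra K A] where
  x : Fin n → A
  D : Fin n → A
  hxx : ∀ i j, x i * x j = x j * x i
  hDD : ∀ i j, D i * D j = D j * D i
  hDx : ∀ i j, D i * x j = x j * D i + (if i = j then 1 else 0)
  basis : Module.Basis (WMon n) K A
  basis_eq : ∀ ab, basis ab = wmono x D ab

/-- The Newton diagram of an operator. -/
noncomputable def ND {K : Type*} [Field K] {n : ℕ} {A : Type*} [Ring A] [Algebra K A]
    (W : WeylData K n A) (P : A) : Finset (WMon n) := (W.basis.repr P).support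

/-- An order function on the Weyl algebra, with values in `ℤ ∪ {-∞} = WithBot ℤ`. -/
structure IsOrderFunction (K : Type*) [Field K] {A : Type*} [Ring A] [Algebra K A]
    (δ : A → WithBot ℤ) : Prop where
  scalar : ∀ c : K, c ≠ 0 → δ (algebraMap K A c) = 0
  bot_iff : ∀ P : A, δ P = ⊥ ↔ P = 0
  add_le : ∀ P Q : A, δ (P + Q) ≤ max (δ P) (δ Q)
  mul : ∀ P Q : A, δ (P * Q) = δ P + δ Q

/-- An admissible order function: an order function such that `δ(P)` is the maximum of
`δ(x^α D^β)` over the Newton diagram of `P`. -/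
def IsAdmissible {K : Type*} [Field K] {n : ℕ} {A : Type*} [Ring A] [Algebra K A]
    (W : WeylData K n A) (δ : A → WithBot ℤ) : Prop :=
  IsOrderFunction K δ ∧
    ∀ P : A, P ≠ 0 → δ P = (ND W P).sup fun ab => δ (wmono W.x W.D ab)

/-- A well monomial ordering: an irreflexive, transitive, total relation, compatible with
addition, which is a well-ordering. -/
def WellMonomialOrdering {σ : Type*} [AddCommMonoid σ] (r : σ → σ → Prop) : Prop :=
  (∀ a, ¬ r a a) ∧ (∀ a b c, r a b → r b c → r a c) ∧
    (∀ a b, a ≠ b → r a b ∨ r b a) ∧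
    (∀ a b c, r a b → r (a + c) (b + c)) ∧ WellFounded r

/-- The monomial ordering `≺_δ` refining the admissible order function `δ` by a fixed
monomial ordering `r`. -/
def rdelta {K : Type*} [Field K] {n : ℕ} {A : Type*} [Ring A] [Algebra K A]
    (W : WeylData K n A) (δ : A → WithBot ℤ) (r : WMon n → WMon n → Prop) :
    WMon n → WMon n → Prop := fun a b =>
  δ (wmono W.x W.D a) < δ (wmono W.x W.D b) ∨
    (δ (wmono W.x W.D a) = δ (wmono W.x W.D b) ∧ r a b)

/-- `e` is the maximal element (exponent) of the Newton diagram of `P` w.r.t. `rd`. -/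
def IsExp {K : Type*} [Field K] {n : ℕ} {A : Type*} [Ring A] [Algebra K A]
    (W : WeylData K n A) (rd : WMon n → WMon n → Prop) (P : A) (e : WMon n) : Prop :=
  e ∈ ND W P ∧ ∀ f ∈ ND W P, f ≠ e → rd f e

/-- Index set of monomials `t^k x^α D^β` of the homogenised Weyl algebra. -/
abbrev HMon (n : ℕ) := ℕ × WMon n

/-- A presentation of the homogenised Weyl algebra `A_n[t]`: generators `t, x_i, D_i` with
`t` commuting with the `x_i, D_i`, `[x_i,x_j] = [D_i,D_j] = 0`, `[D_i,x_j] = δ_{ij} t²`,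
and the monomials `t^k x^α D^β` forming a `K`-basis. -/
structure HWeylData (K : Type*) [Field K] (n : ℕ) (B : Type*) [Ring B] [Algebra K B] where
  t : B
  x : Fin n → B
  D : Fin n → B
  htx : ∀ i, t * x i = x i * t
  htD : ∀ i, t * D i = D i * t
  hxx : ∀ i j, x i * x j = x j * x i
  hDD : ∀ i j, D i * D j = D j * D i
  hDx : ∀ i j, D i * x j = x j * D i + (if i = j then t ^ 2 else 0)
  basis : Module.Basis (HMon n) K B
  basis_eq : ∀ v, basis v = t ^ v.1 * wmono x D v.2

/-- Total degree `|α| + |β|` of a monomial of the Weyl algebra. -/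
def wdeg {n : ℕ} (ab : WMon n) : ℕ := (∑ i, ab.1 i) + (∑ i, ab.2 i)

/-- The total order `ord^T(P)` of an operator `P`. -/
noncomputable def ordT {K : Type*} [Field K] {n : ℕ} {A : Type*} [Ring A] [Algebra K A]
    (W : WeylData K n A) (P : A) : ℕ := (ND W P).sup wdeg

/-- The Newton diagram of an element of the homogenised Weyl algebra. -/
noncomputable def NDH {K : Type*} [Field K] {n : ℕ} {B : Type*} [Ring B] [Algebra K B]
    (V : HWeylData K n B) (H : B) : Finset (HMon n) := (V.basis.repr H).support

/-- The homogenisation `h(P) = Σ p_{αβ} t^{ord^T(P)-|α|-|β|} x^α D^β` of an operator. -/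
noncomputable def homog {K : Type*} [Field K] {n : ℕ} {A B : Type*} [Ring A] [Algebra K A]
    [Ring B] [Algebra K B] (W : WeylData K n A) (V : HWeylData K n B) (P : A) : B :=
  ∑ ab ∈ ND W P,
    W.basis.repr P ab • (V.t ^ (ordT W P - wdeg ab) * wmono V.x V.D ab)

/-- The dehomogenisation `H|_{t=1}` of an element of the homogenised Weyl algebra. -/
noncomputable def dehom {K : Type*} [Field K] {n : ℕ} {A B : Type*} [Ring A] [Algebra K A]
    [Ring B] [Algebra K B] (W : WeylData K n A) (V : HWeylData K n B) (H : B) : A :=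
  ∑ v ∈ NDH V H, V.basis.repr H v • wmono W.x W.D v.2

/-- `H` is homogeneous of degree `d` in `A_n[t]` (degree of `t^k x^α D^β` is `k+|α|+|β|`). -/
def IsHomogOfDeg {K : Type*} [Field K] {n : ℕ} {B : Type*} [Ring B] [Algebra K B]
    (V : HWeylData K n B) (H : B) (d : ℕ) : Prop :=
  ∀ v ∈ NDH V H, v.1 + wdeg v.2 = d

/-- Total degree of a monomial of `A_n[t]`. -/
def hdeg {n : ℕ} (v : HMon n) : ℕ := v.1 + wdeg v.2

/-- The well monomial ordering `⊲` on `ℕ^{2n+1}`: compare first by total degree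
`k + |α| + |β|`, then by `≺_δ` on `(α,β)`. -/
def rT {K : Type*} [Field K] {n : ℕ} {A : Type*} [Ring A] [Algebra K A]
    (W : WeylData K n A) (δ : A → WithBot ℤ) (r : WMon n → WMon n → Prop) :
    HMon n → HMon n → Prop := fun a b =>
  hdeg a < hdeg b ∨ (hdeg a = hdeg b ∧ rdelta W δ r a.2 b.2)

/-- `E` is the maximal element of the Newton diagram of `H ∈ A_n[t]` w.r.t. `rd`. -/
def IsExpH {K : Type*} [Field K] {n : ℕ} {B : Type*} [Ring B] [Algebra K B]
    (V : HWeylData K n B) (rd : HMon n → HMon n → Prop) (H : B) (E : HMon n) : Prop :=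
  E ∈ NDH V H ∧ ∀ F ∈ NDH V H, F ≠ E → rd F E

/-- The translated cone `e + ℕ^{2n+1}`. -/
def expCone {n : ℕ} (e : HMon n) : Set (HMon n) := {v | ∃ γ, v = e + γ}

section auxlists
variable {M : Type*} [Monoid M]

lemma ofFn_pow_prod_mul : ∀ {n : ℕ} (x : Fin n → M), (∀ i j, Commute (x i) (x j)) →
    ∀ α γ : Fin n → ℕ,
    (List.ofFn fun i => x i ^ α i).prod * (List.ofFn fun i => x i ^ γ i).prod =
      (List.ofFn fun i => x i ^ (α i + γ i)).prod := by
  intro n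
  induction n with
  | zero => intro x h α γ; simp
  | succ n ih =>
    intro x h α γ
    have hc : Commute (x 0 ^ γ 0) ((List.ofFn fun i : Fin n => x i.succ ^ α i.succ).prod) := by
      apply Commute.list_prod_right
      intro y hy
      rw [List.mem_ofFn] at hy
      obtain ⟨i, rfl⟩ := hy
      exact (h _ _).pow_pow _ _
    simp only [List.ofFn_succ, List.prod_cons, Function.comp]
    calc x 0 ^ α 0 * (List.ofFn fun i : Fin n => x i.succ ^ α i.succ).prod *
          (x 0 ^ γ 0 * (List.ofFn fun i : Fin n => x i.succ ^ γ i.succ).prod)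
        = x 0 ^ α 0 * ((List.ofFn fun i : Fin n => x i.succ ^ α i.succ).prod *
            x 0 ^ γ 0) * (List.ofFn fun i : Fin n => x i.succ ^ γ i.succ).prod := by
          simp [mul_assoc]
      _ = x 0 ^ α 0 * (x 0 ^ γ 0 * (List.ofFn fun i : Fin n => x i.succ ^ α i.succ).prod)
            * (List.ofFn fun i : Fin n => x i.succ ^ γ i.succ).prod := by rw [← hc.eq]
      _ = (x 0 ^ (α 0 + γ 0)) * ((List.ofFn fun i : Fin n => x i.succ ^ α i.succ).prod
            * (List.ofFn fun i : Fin n => x i.succ ^ γ i.succ).prod) := by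
          rw [pow_add]; simp [mul_assoc]
      _ = x 0 ^ (α 0 + γ 0) * (List.ofFn fun i : Fin n => x i.succ ^ (α i.succ + γ i.succ)).prod := by
          rw [ih (fun i => x i.succ) (fun i j => h _ _)]

lemma ofFn_prod_eq_single : ∀ {n : ℕ} (f : Fin n → M) (i : Fin n),
    (∀ j, j ≠ i → f j = 1) → (List.ofFn f).prod = f i := by
  intro n
  induction n with
  | zero => exact fun f i => i.elim0
  | succ n ih =>
    intro f i h
    rw [List.ofFn_succ, List.prod_cons]
    rcases Fin.eq_zero_or_eq_succ i with rfl | ⟨j, rfl⟩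
    · have : ∀ y ∈ List.ofFn fun i : Fin n => f i.succ, y = 1 := by
        intro y hy
        rw [List.mem_ofFn] at hy
        obtain ⟨k, rfl⟩ := hy
        exact h _ (Fin.succ_ne_zero k)
      rw [List.prod_eq_one this, mul_one]
    · rw [h 0 (Fin.succ_ne_zero j).symm, one_mul]
      exact ih (fun i => f i.succ) j (fun k hk => h _ (fun hh => hk (Fin.succ_injective n hh)))

end auxlists

namespace HWeylData
variable {K : Type*} [Field K] {n : ℕ} {B : Type*} [Ring B] [Algebra K B]
variable (V : HWeylData K n B)

def Xp (α : Fin n → ℕ) : B := (List.ofFn fun i => V.x i ^ α i).prod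
def Dp (β : Fin n → ℕ) : B := (List.ofFn fun i => V.D i ^ β i).prod

lemma wmono_eq (ab : WMon n) : wmono V.x V.D ab = V.Xp ab.1 * V.Dp ab.2 := rfl

lemma Xp_mul (α γ : Fin n → ℕ) : V.Xp α * V.Xp γ = V.Xp (α + γ) :=
  ofFn_pow_prod_mul V.x (fun i j => (V.hxx i j)) α γ

lemma Dp_mul (β γ : Fin n → ℕ) : V.Dp β * V.Dp γ = V.Dp (β + γ) :=
  ofFn_pow_prod_mul V.D (fun i j => (V.hDD i j)) β γ

lemma Xp_single (j : Fin n) : V.Xp (Pi.single j 1) = V.x j := by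
  have := ofFn_prod_eq_single (fun i => V.x i ^ (Pi.single j 1 : Fin n → ℕ) i) j
    (fun k hk => by simp [Pi.single_eq_of_ne hk])
  simpa [Xp, Pi.single_eq_same] using this

lemma Dp_single (j : Fin n) : V.Dp (Pi.single j 1) = V.D j := by
  have := ofFn_prod_eq_single (fun i => V.D i ^ (Pi.single j 1 : Fin n → ℕ) i) j
    (fun k hk => by simp [Pi.single_eq_of_ne hk])
  simpa [Dp, Pi.single_eq_same] using this

lemma t_commute_Xp (α : Fin n → ℕ) : Commute V.t (V.Xp α) := by
  apply Commute.list_prod_right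
  intro y hy
  rw [List.mem_ofFn] at hy
  obtain ⟨i, rfl⟩ := hy
  exact Commute.pow_right (V.htx i) _

lemma t_commute_Dp (β : Fin n → ℕ) : Commute V.t (V.Dp β) := by
  apply Commute.list_prod_right
  intro y hy
  rw [List.mem_ofFn] at hy
  obtain ⟨i, rfl⟩ := hy
  exact Commute.pow_right (V.htD i) _

lemma x_commute_Dp {j : Fin n} {β : Fin n → ℕ} (hβ : β j = 0) :
    Commute (V.x j) (V.Dp β) := by
  apply Commute.list_prod_right
  intro y hy
  rw [List.mem_ofFn] at hy
  obtain ⟨i, rfl⟩ := hy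
  rcases eq_or_ne i j with rfl | hij
  · simp only [hβ, pow_zero]; exact Commute.one_right _
  · refine Commute.pow_right ?_ _
    have := V.hDx i j
    rw [if_neg hij, add_zero] at this
    exact (Commute.symm this)

lemma x_commute_Xp (j : Fin n) (α : Fin n → ℕ) : Commute (V.x j) (V.Xp α) := by
  apply Commute.list_prod_right
  intro y hy
  rw [List.mem_ofFn] at hy
  obtain ⟨i, rfl⟩ := hy
  exact Commute.pow_right (V.hxx j i) _

lemma Dpow_mul_x (j : Fin n) : ∀ m : ℕ,
    V.D j ^ m * V.x j = V.x j * V.D j ^ m + m • (V.t ^ 2 * V.D j ^ (m - 1)) := by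
  have base : V.D j * V.x j = V.x j * V.D j + V.t ^ 2 := by
    have := V.hDx j j; rwa [if_pos rfl] at this
  have htD2 : ∀ m : ℕ, V.D j ^ m * V.t ^ 2 = V.t ^ 2 * V.D j ^ m := fun m =>
    (((Commute.pow_right (V.htD j) m).pow_left 2).symm).eq
  intro m
  induction m with
  | zero => simp
  | succ m ih =>
    have h1 : V.D j ^ (m + 1) * V.x j = V.D j ^ m * (V.x j * V.D j) + V.D j ^ m * V.t ^ 2 := by
      rw [pow_succ, mul_assoc, base, mul_add]
    rw [h1, ← mul_assoc, ih, htD2, add_mul, smul_mul_assoc, mul_assoc, ← pow_succ]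
    rcases Nat.eq_zero_or_pos m with rfl | hm
    · simp
    · have hm1 : m - 1 + 1 = m := Nat.succ_pred_eq_of_pos hm
      rw [mul_assoc, ← pow_succ, hm1, Nat.add_sub_cancel, succ_nsmul]
      abel

lemma Dp_mul_x (β : Fin n → ℕ) (j : Fin n) :
    V.Dp β * V.x j = V.x j * V.Dp β + (β j) • (V.t ^ 2 * V.Dp (β - Pi.single j 1)) := by
  set β' : Fin n → ℕ := Function.update β j 0 with hβ'
  have hβ'j : β' j = 0 := Function.update_self j 0 β
  have hsplit : β' + Pi.single j (β j) = β := by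
    funext i
    rcases eq_or_ne i j with rfl | hij
    · simp [hβ', Pi.single_eq_same]
    · simp [hβ', Function.update_of_ne hij, Pi.single_eq_of_ne hij]
  have hsingle : V.Dp (Pi.single j (β j)) = V.D j ^ β j := by
    have := ofFn_prod_eq_single (fun i => V.D i ^ (Pi.single j (β j) : Fin n → ℕ) i) j
      (fun k hk => by simp [Pi.single_eq_of_ne hk])
    simpa [Dp, Pi.single_eq_same] using this
  have h1 : V.Dp β = V.Dp β' * V.D j ^ β j := by rw [← hsingle, Dp_mul, hsplit]
  have hsub : β' + Pi.single j (β j - 1) = β - Pi.single j 1 := by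
    funext i
    rcases eq_or_ne i j with rfl | hij
    · simp [hβ', Pi.single_eq_same]
    · simp [hβ', Function.update_of_ne hij, Pi.single_eq_of_ne hij]
  have hsub2 : V.Dp β' * V.D j ^ (β j - 1) = V.Dp (β - Pi.single j 1) := by
    have hs : V.Dp (Pi.single j (β j - 1)) = V.D j ^ (β j - 1) := by
      have := ofFn_prod_eq_single (fun i => V.D i ^ (Pi.single j (β j - 1) : Fin n → ℕ) i) j
        (fun k hk => by simp [Pi.single_eq_of_ne hk])
      simpa [Dp, Pi.single_eq_same] using this
    rw [← hs, Dp_mul, hsub]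
  rw [h1, mul_assoc, Dpow_mul_x, mul_add, ← mul_assoc, ← (V.x_commute_Dp hβ'j).eq,
    mul_assoc, ← h1]
  congr 1
  rw [mul_smul_comm, ← mul_assoc, ((V.t_commute_Dp β').pow_left 2).symm.eq, mul_assoc, hsub2]

end HWeylData
section Order
variable {K : Type*} [Field K] {n : ℕ} {A : Type*} [Ring A] [Algebra K A]
variable (W : WeylData K n A) (δ : A → WithBot ℤ) (r : WMon n → WMon n → Prop)

/-- shorthand -/
noncomputable def δw (a : WMon n) : WithBot ℤ := δ (wmono W.x W.D a)

variable {W δ r}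

lemma wmono_ne_zero (a : WMon n) : wmono W.x W.D a ≠ 0 := by
  rw [← W.basis_eq]; exact W.basis.ne_zero a

section ofd
variable (hδ : IsOrderFunction K δ)
include hδ

lemma delta_one : δ (1 : A) = 0 := by
  have := hδ.scalar (1 : K) one_ne_zero
  rwa [map_one] at this

lemma delta_neg (P : A) : δ (-P) = δ P := by
  have h1 : (-P : A) = algebraMap K A (-1) * P := by
    simp [Algebra.algebraMap_eq_smul_one]
  rw [h1, hδ.mul, hδ.scalar (-1 : K) (neg_ne_zero.mpr one_ne_zero), zero_add]

lemma delta_ofFn_prod : ∀ {k : ℕ} (f : Fin k → A),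
    δ ((List.ofFn f).prod) = ∑ i, δ (f i) := by
  intro k
  induction k with
  | zero => intro f; simpa using delta_one hδ
  | succ k ih =>
    intro f
    rw [List.ofFn_succ, List.prod_cons, hδ.mul, ih fun i => f i.succ,
      Fin.sum_univ_succ]

lemma delta_wmono (a : WMon n) :
    δ (wmono W.x W.D a) = (∑ i, δ (W.x i ^ a.1 i)) + ∑ i, δ (W.D i ^ a.2 i) := by
  rw [wmono, hδ.mul, delta_ofFn_prod hδ, delta_ofFn_prod hδ]

lemma delta_wmono_add (a b : WMon n) : δw W δ (a + b) = δw W δ a + δw W δ b := by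
  simp only [δw, delta_wmono hδ]
  have h1 : ∀ i, δ (W.x i ^ (a + b).1 i) = δ (W.x i ^ a.1 i) + δ (W.x i ^ b.1 i) := by
    intro i
    have : (a + b).1 i = a.1 i + b.1 i := rfl
    rw [this, pow_add, hδ.mul]
  have h2 : ∀ i, δ (W.D i ^ (a + b).2 i) = δ (W.D i ^ a.2 i) + δ (W.D i ^ b.2 i) := by
    intro i
    have : (a + b).2 i = a.2 i + b.2 i := rfl
    rw [this, pow_add, hδ.mul]
  simp only [h1, h2, Finset.sum_add_distrib]
  abel

lemma delta_wmono_ne_bot (a : WMon n) : δw W δ a ≠ ⊥ := by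
  rw [δw, Ne, hδ.bot_iff]
  exact wmono_ne_zero a

lemma delta_xD_nonneg (i : Fin n) : 0 ≤ δ (W.x i) + δ (W.D i) := by
  have hone : (1 : A) = W.D i * W.x i + -(W.x i * W.D i) := by
    have := W.hDx i i
    rw [if_pos rfl] at this
    rw [this]; abel
  have h0 : (0 : WithBot ℤ) = δ (1 : A) := (delta_one hδ).symm
  calc (0 : WithBot ℤ) = δ (1 : A) := h0
    _ ≤ max (δ (W.D i * W.x i)) (δ (-(W.x i * W.D i))) := by
        rw [hone]; exact hδ.add_le _ _
    _ = max (δ (W.D i) + δ (W.x i)) (δ (W.x i) + δ (W.D i)) := by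
        rw [hδ.mul, delta_neg hδ, hδ.mul]
    _ = δ (W.x i) + δ (W.D i) := by rw [add_comm (δ (W.D i)), max_self]

lemma delta_pow_pair_nonneg (i : Fin n) : ∀ m : ℕ, 0 ≤ δ (W.x i ^ m) + δ (W.D i ^ m) := by
  intro m
  induction m with
  | zero => simp [delta_one hδ]
  | succ m ih =>
    have h1 : δ (W.x i ^ (m + 1)) = δ (W.x i ^ m) + δ (W.x i) := by rw [pow_succ, hδ.mul]
    have h2 : δ (W.D i ^ (m + 1)) = δ (W.D i ^ m) + δ (W.D i) := by rw [pow_succ, hδ.mul]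
    have h3 : (0 : WithBot ℤ) ≤ δ (W.x i) + δ (W.D i) := delta_xD_nonneg hδ i
    have h4 := add_le_add ih h3
    rw [add_zero] at h4
    calc (0 : WithBot ℤ) ≤ (δ (W.x i ^ m) + δ (W.D i ^ m)) + (δ (W.x i) + δ (W.D i)) := h4
      _ = δ (W.x i ^ (m + 1)) + δ (W.D i ^ (m + 1)) := by rw [h1, h2]; abel

lemma delta_diag_nonneg (s : Fin n → ℕ) : 0 ≤ δw W δ ((s, s) : WMon n) := by
  rw [δw, delta_wmono hδ, ← Finset.sum_add_distrib]
  exact Finset.sum_nonneg fun i _ => delta_pow_pair_nonneg hδ i _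

end ofd

section wmo
variable (hr : WellMonomialOrdering r)
include hr

lemma wmo_zero_lt {c : WMon n} (hc : c ≠ 0) : r 0 c := by
  rcases hr.2.2.1 0 c (Ne.symm hc) with h | h
  · exact h
  · exfalso
    set f : ℕ → WMon n := fun k => k • c with hf
    have hdesc : ∀ k : ℕ, r (f (k + 1)) (f k) := by
      intro k
      have := hr.2.2.2.1 c 0 (k • c) h
      rw [zero_add] at this
      have he : c + k • c = (k + 1) • c := by rw [add_comm, succ_nsmul]
      rwa [he] at this
    obtain ⟨m, ⟨N, hN⟩, hmin⟩ := hr.2.2.2.2.has_min (Set.range f) ⟨f 0, ⟨0, rfl⟩⟩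
    exact hmin (f (N + 1)) ⟨N + 1, rfl⟩ (hN ▸ hdesc N)

lemma wmo_lt_add {a c : WMon n} (hc : c ≠ 0) : r a (a + c) := by
  have := hr.2.2.2.1 0 c a (wmo_zero_lt hr hc)
  rwa [zero_add, add_comm c a] at this

end wmo

section rdelta
variable (hδ : IsOrderFunction K δ) (hr : WellMonomialOrdering r)

lemma rdelta_trans (hr : WellMonomialOrdering r) {a b c : WMon n}
    (h1 : rdelta W δ r a b) (h2 : rdelta W δ r b c) : rdelta W δ r a c := by
  rcases h1 with h1 | ⟨h1, h1'⟩ <;> rcases h2 with h2 | ⟨h2, h2'⟩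
  · exact Or.inl (h1.trans h2)
  · exact Or.inl (h2 ▸ h1)
  · exact Or.inl (h1 ▸ h2)
  · exact Or.inr ⟨h1.trans h2, hr.2.1 _ _ _ h1' h2'⟩

lemma rdelta_irrefl (hr : WellMonomialOrdering r) (a : WMon n) : ¬ rdelta W δ r a a := by
  rintro (h | ⟨-, h⟩)
  · exact lt_irrefl _ h
  · exact hr.1 a h

lemma rdelta_total (hr : WellMonomialOrdering r) {a b : WMon n} (hab : a ≠ b) :
    rdelta W δ r a b ∨ rdelta W δ r b a := by
  rcases lt_trichotomy (δ (wmono W.x W.D a)) (δ (wmono W.x W.D b)) with h | h | h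
  · exact Or.inl (Or.inl h)
  · rcases hr.2.2.1 a b hab with h' | h'
    · exact Or.inl (Or.inr ⟨h, h'⟩)
    · exact Or.inr (Or.inr ⟨h.symm, h'⟩)
  · exact Or.inr (Or.inl h)

include hδ hr

lemma rdelta_add_right {a b : WMon n} (c : WMon n) (h : rdelta W δ r a b) :
    rdelta W δ r (a + c) (b + c) := by
  have ha : δw W δ (a + c) = δw W δ a + δw W δ c := delta_wmono_add hδ a c
  have hb : δw W δ (b + c) = δw W δ b + δw W δ c := delta_wmono_add hδ b c
  rcases h with h | ⟨h, h'⟩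
  · left
    show δw W δ (a + c) < δw W δ (b + c)
    rw [ha, hb]
    exact WithBot.add_lt_add_right (delta_wmono_ne_bot hδ c) h
  · right
    have h'' : δw W δ a = δw W δ b := h
    constructor
    · show δw W δ (a + c) = δw W δ (b + c)
      rw [ha, hb, h'']
    · exact hr.2.2.2.1 a b c h'

lemma rdelta_lt_add_diag {c : WMon n} {s : Fin n → ℕ} (hs : s ≠ 0) :
    rdelta W δ r c (c + (s, s)) := by
  have hne : ((s, s) : WMon n) ≠ 0 := by
    intro h
    exact hs (congrArg Prod.fst h)
  have hadd : δw W δ (c + (s, s)) = δw W δ c + δw W δ ((s, s) : WMon n) :=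
    delta_wmono_add hδ c _
  have hle : δw W δ c ≤ δw W δ (c + (s, s)) := by
    rw [hadd]
    exact le_add_of_nonneg_right (delta_diag_nonneg hδ s)
  rcases lt_or_eq_of_le hle with h | h
  · exact Or.inl h
  · exact Or.inr ⟨h, wmo_lt_add hr hne⟩

end rdelta
end Order
section RT
variable {K : Type*} [Field K] {n : ℕ} {A : Type*} [Ring A] [Algebra K A]
variable {W : WeylData K n A} {δ : A → WithBot ℤ} {r : WMon n → WMon n → Prop}

lemma wdeg_add (a b : WMon n) : wdeg (a + b) = wdeg a + wdeg b := by
  simp only [wdeg]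
  have h1 : ∀ i, (a + b).1 i = a.1 i + b.1 i := fun i => rfl
  have h2 : ∀ i, (a + b).2 i = a.2 i + b.2 i := fun i => rfl
  simp only [h1, h2, Finset.sum_add_distrib]
  omega

lemma hdeg_add (a b : HMon n) : hdeg (a + b) = hdeg a + hdeg b := by
  simp only [hdeg]
  have : (a + b).2 = a.2 + b.2 := rfl
  rw [this, wdeg_add]
  have : (a + b).1 = a.1 + b.1 := rfl
  rw [this]; omega

lemma hdeg_eq_zero {v : HMon n} (h : hdeg v = 0) : v = 0 := by
  simp only [hdeg, wdeg] at h
  have h1 : v.1 = 0 := by omega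
  have h2 : ∑ i, v.2.1 i = 0 := by omega
  have h3 : ∑ i, v.2.2 i = 0 := by omega
  rw [Finset.sum_eq_zero_iff] at h2 h3
  have : v = (v.1, (v.2.1, v.2.2)) := rfl
  rw [this, h1]
  have e2 : v.2.1 = 0 := funext fun i => h2 i (Finset.mem_univ i)
  have e3 : v.2.2 = 0 := funext fun i => h3 i (Finset.mem_univ i)
  rw [e2, e3]
  rfl

lemma rT_trans (hr : WellMonomialOrdering r) {a b c : HMon n}
    (h1 : rT W δ r a b) (h2 : rT W δ r b c) : rT W δ r a c := by
  rcases h1 with h1 | ⟨h1, h1'⟩ <;> rcases h2 with h2 | ⟨h2, h2'⟩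
  · exact Or.inl (h1.trans h2)
  · exact Or.inl (h2 ▸ h1)
  · exact Or.inl (h1 ▸ h2)
  · exact Or.inr ⟨h1.trans h2, rdelta_trans hr h1' h2'⟩

lemma rT_irrefl (hr : WellMonomialOrdering r) (a : HMon n) : ¬ rT W δ r a a := by
  rintro (h | ⟨-, h⟩)
  · exact lt_irrefl _ h
  · exact rdelta_irrefl hr a.2 h

lemma rT_asymm (hr : WellMonomialOrdering r) {a b : HMon n}
    (h : rT W δ r a b) : ¬ rT W δ r b a :=
  fun h' => rT_irrefl hr a (rT_trans hr h h')

lemma rT_total (hr : WellMonomialOrdering r) {a b : HMon n} (hab : a ≠ b) :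
    rT W δ r a b ∨ rT W δ r b a := by
  rcases Nat.lt_trichotomy (hdeg a) (hdeg b) with h | h | h
  · exact Or.inl (Or.inl h)
  · have h2 : a.2 ≠ b.2 := by
      intro he
      apply hab
      have h1 : a.1 = b.1 := by
        have := h
        simp only [hdeg, he] at this
        omega
      exact Prod.ext h1 he
    rcases rdelta_total (W := W) (δ := δ) hr h2 with h' | h'
    · exact Or.inl (Or.inr ⟨h, h'⟩)
    · exact Or.inr (Or.inr ⟨h.symm, h'⟩)
  · exact Or.inr (Or.inl h)

lemma rT_add_right (hδ : IsOrderFunction K δ) (hr : WellMonomialOrdering r)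
    {a b : HMon n} (c : HMon n) (h : rT W δ r a b) : rT W δ r (a + c) (b + c) := by
  rcases h with h | ⟨h, h'⟩
  · exact Or.inl (by rw [hdeg_add, hdeg_add]; omega)
  · refine Or.inr ⟨by rw [hdeg_add, hdeg_add, h], ?_⟩
    have : (a + c).2 = a.2 + c.2 := rfl
    rw [this]
    have : (b + c).2 = b.2 + c.2 := rfl
    rw [this]
    exact rdelta_add_right hδ hr c.2 h'

lemma rT_lt_add {u c : HMon n} (hc : c ≠ 0) : rT W δ r u (u + c) := by
  left
  rw [hdeg_add]
  have : hdeg c ≠ 0 := fun h => hc (hdeg_eq_zero h)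
  omega

lemma sub_single_add {β : Fin n → ℕ} {j : Fin n} (hj : 0 < β j) :
    (β - (Pi.single j 1 : Fin n → ℕ)) + Pi.single j 1 = β := by
  funext i
  rcases eq_or_ne i j with rfl | hij
  · simp only [Pi.add_apply, Pi.sub_apply, Pi.single_eq_same]
    omega
  · simp [Pi.single_eq_of_ne hij]

lemma sum_sub_single {β : Fin n → ℕ} {j : Fin n} (hj : 0 < β j) :
    (∑ i : Fin n, (β - (Pi.single j 1 : Fin n → ℕ)) i) + 1 = ∑ i : Fin n, β i := by
  have h0 := congrArg (fun g : Fin n → ℕ => ∑ i, g i) (sub_single_add hj)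
  simp only [Pi.add_apply, Finset.sum_add_distrib, Finset.sum_pi_single', Finset.mem_univ, if_true, Pi.single_eq_same] at h0
  rw [← h0]

lemma rT_comm_term (hδ : IsOrderFunction K δ) (hr : WellMonomialOrdering r)
    {u : HMon n} {j : Fin n} (hj : 0 < u.2.2 j) :
    rT W δ r (u.1 + 2, (u.2.1, u.2.2 - Pi.single j 1))
      (u.1, (u.2.1 + Pi.single j 1, u.2.2)) := by
  have hsingle_ne : (Pi.single j 1 : Fin n → ℕ) ≠ 0 := by
    intro h
    have := congrFun h j
    simp at this
  right
  constructor
  · simp only [hdeg, wdeg]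
    have h1 := sum_sub_single (n := n) hj
    simp only [Pi.add_apply, Finset.sum_add_distrib, Finset.sum_pi_single', Finset.mem_univ, if_true, Pi.single_eq_same]
    omega
  · have key : ((u.2.1 + Pi.single j 1, u.2.2) : WMon n)
        = (u.2.1, u.2.2 - Pi.single j 1) + (Pi.single j 1, Pi.single j 1) := by
      refine Prod.ext rfl ?_
      show u.2.2 = (u.2.2 - Pi.single j 1) + Pi.single j 1
      rw [sub_single_add hj]
    rw [key]
    exact rdelta_lt_add_diag hδ hr hsingle_ne

lemma wdeg_le_bound {M : ℕ} {ab : WMon n} (h : wdeg ab ≤ M) :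
    ab.1 ≤ (fun _ => M) ∧ ab.2 ≤ (fun _ => M) := by
  constructor <;> intro i
  · have h1 : ab.1 i ≤ ∑ k, ab.1 k := Finset.single_le_sum (fun k _ => Nat.zero_le _) (Finset.mem_univ i)
    simp only [wdeg] at h
    show ab.1 i ≤ M
    omega
  · have h1 : ab.2 i ≤ ∑ k, ab.2 k := Finset.single_le_sum (fun k _ => Nat.zero_le _) (Finset.mem_univ i)
    simp only [wdeg] at h
    show ab.2 i ≤ M
    omega

lemma wmon_bounded_finite (M : ℕ) : ({ab : WMon n | wdeg ab ≤ M}).Finite := by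
  have h1 : (Set.Iic ((fun _ => M) : Fin n → ℕ)).Finite := Set.finite_Iic _
  refine ((h1.prod h1).subset ?_)
  rintro ⟨a, b⟩ hab
  exact ⟨(wdeg_le_bound hab).1, (wdeg_le_bound hab).2⟩

lemma rT_wf (hr : WellMonomialOrdering r) : WellFounded (rT W δ r) := by
  letI : IsIrrefl (HMon n) (rT W δ r) := ⟨rT_irrefl hr⟩
  letI : IsTrans (HMon n) (rT W δ r) := ⟨fun _ _ _ => rT_trans hr⟩
  letI : IsStrictOrder (HMon n) (rT W δ r) := ⟨⟩
  rw [RelEmbedding.wellFounded_iff_isEmpty]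
  constructor
  intro f
  have hdesc : ∀ k : ℕ, rT W δ r (f (k + 1)) (f k) := fun k => f.map_rel_iff.2 (Nat.lt_succ_self k)
  have hanti : ∀ k, hdeg (f (k + 1)) ≤ hdeg (f k) := by
    intro k
    rcases hdesc k with h | ⟨h, -⟩
    · exact h.le
    · exact h.le
  have hmono : ∀ a b : ℕ, a ≤ b → hdeg (f b) ≤ hdeg (f a) := fun a b hab =>
    Nat.rel_of_forall_rel_succ_of_le (· ≥ ·) (f := fun k => hdeg (f k)) hanti hab
  obtain ⟨M, ⟨N, rfl⟩, hMmin⟩ := (Nat.lt_wfRel.wf).has_min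
    (Set.range fun k => hdeg (f k)) ⟨_, ⟨0, rfl⟩⟩
  have hconst : ∀ k, hdeg (f (N + k)) = hdeg (f N) := by
    intro k
    have h1 : hdeg (f (N + k)) ≤ hdeg (f N) := hmono N (N + k) (Nat.le_add_right _ _)
    have h2 : ¬ hdeg (f (N + k)) < hdeg (f N) := hMmin _ ⟨N + k, rfl⟩
    omega
  set g : ℕ → WMon n := fun k => (f (N + k)).2 with hg
  have hgdesc : ∀ k, rdelta W δ r (g (k + 1)) (g k) := by
    intro k
    rcases hdesc (N + k) with h | ⟨-, h⟩
    · exfalso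
      have e1 := hconst k
      have e2 := hconst (k + 1)
      rw [← Nat.add_assoc] at e2
      omega
    · have : N + k + 1 = N + (k + 1) := by omega
      rwa [this] at h
  have hchain : ∀ a b : ℕ, a < b → rdelta W δ r (g b) (g a) := by
    intro a b hab
    induction b with
    | zero => omega
    | succ b ih =>
      rcases Nat.lt_or_ge a b with h | h
      · exact rdelta_trans hr (hgdesc b) (ih h)
      · have : a = b := by omega
        exact this ▸ hgdesc b
  have hginj : Function.Injective g := by
    intro a b hab
    by_contra hne
    rcases Nat.lt_or_ge a b with h | h
    · have hc := hchain a b h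
      rw [hab] at hc
      exact rdelta_irrefl hr (g b) hc
    · have h' : b < a := by omega
      have hc := hchain b a h'
      rw [hab] at hc
      exact rdelta_irrefl hr (g b) hc
  have hmem : ∀ k, g k ∈ {ab : WMon n | wdeg ab ≤ hdeg (f N)} := by
    intro k
    have h2 := hconst k
    simp only [hdeg] at h2
    simp only [Set.mem_setOf_eq, hg, hdeg]
    omega
  exact (Set.infinite_of_injective_forall_mem hginj hmem) (wmon_bounded_finite (hdeg (f N)))

lemma exists_rel_max {γ : Type*} {rel : γ → γ → Prop}
    (htrans : ∀ a b c, rel a b → rel b c → rel a c)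
    (htot : ∀ a b : γ, a ≠ b → rel a b ∨ rel b a)
    (s : Finset γ) (hs : s.Nonempty) : ∃ E ∈ s, ∀ f ∈ s, f ≠ E → rel f E := by
  classical
  induction s using Finset.induction_on with
  | empty => exact absurd hs (by simp)
  | @insert a s ha ih =>
    rcases s.eq_empty_or_nonempty with rfl | hsne
    · exact ⟨a, by simp, fun f hf hne => absurd (by simpa using hf) hne⟩
    · obtain ⟨E, hE, hEmax⟩ := ih hsne
      rcases eq_or_ne a E with rfl | haE
      · exact ⟨a, Finset.mem_insert_self _ _, fun f hf hne => by
          rcases Finset.mem_insert.1 hf with rfl | hfs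
          · exact absurd rfl hne
          · exact hEmax f hfs hne⟩
      · rcases htot a E haE with h | h
        · refine ⟨E, Finset.mem_insert_of_mem hE, fun f hf hne => ?_⟩
          rcases Finset.mem_insert.1 hf with rfl | hfs
          · exact h
          · exact hEmax f hfs hne
        · refine ⟨a, Finset.mem_insert_self _ _, fun f hf hne => ?_⟩
          rcases Finset.mem_insert.1 hf with rfl | hfs
          · exact absurd rfl hne
          · rcases eq_or_ne f E with rfl | hfE
            · exact h
            · exact htrans _ _ _ (hEmax f hfs hfE) h

end RT
section Prods
variable {K : Type*} [Field K] {n : ℕ} {A B : Type*} [Ring A] [Algebra K A]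
  [Ring B] [Algebra K B]
variable {W : WeylData K n A} {V : HWeylData K n B}
  {δ : A → WithBot ℤ} {r : WMon n → WMon n → Prop}

/-- generator exponents -/
def tgen (n : ℕ) : HMon n := (1, (0, 0))
def xgen (j : Fin n) : HMon n := (0, (Pi.single j 1, 0))
def Dgen (j : Fin n) : HMon n := (0, (0, Pi.single j 1))

lemma add_tgen (u : HMon n) : u + tgen n = (u.1 + 1, u.2) := by
  refine Prod.ext rfl ?_
  show u.2 + 0 = u.2
  rw [add_zero]

lemma add_xgen (u : HMon n) (j : Fin n) :
    u + xgen j = (u.1, (u.2.1 + Pi.single j 1, u.2.2)) := by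
  refine Prod.ext (add_zero _) (Prod.ext rfl ?_)
  show u.2.2 + 0 = u.2.2
  rw [add_zero]

lemma add_Dgen (u : HMon n) (j : Fin n) :
    u + Dgen j = (u.1, (u.2.1, u.2.2 + Pi.single j 1)) := by
  refine Prod.ext (add_zero _) (Prod.ext ?_ rfl)
  show u.2.1 + 0 = u.2.1
  rw [add_zero]

namespace HWeylData

lemma Xp_zero (V : HWeylData K n B) : V.Xp 0 = 1 := by
  apply List.prod_eq_one
  intro y hy
  rw [List.mem_ofFn] at hy
  obtain ⟨i, rfl⟩ := hy
  exact pow_zero _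

lemma Dp_zero (V : HWeylData K n B) : V.Dp 0 = 1 := by
  apply List.prod_eq_one
  intro y hy
  rw [List.mem_ofFn] at hy
  obtain ⟨i, rfl⟩ := hy
  exact pow_zero _

lemma basis_form (V : HWeylData K n B) (u : HMon n) :
    V.basis u = V.t ^ u.1 * (V.Xp u.2.1 * V.Dp u.2.2) := by
  rw [V.basis_eq, wmono_eq]

lemma basis_zero (V : HWeylData K n B) : V.basis (0 : HMon n) = 1 := by
  rw [basis_form]
  show V.t ^ 0 * (V.Xp 0 * V.Dp 0) = 1
  rw [pow_zero, V.Xp_zero, V.Dp_zero, one_mul, one_mul]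

lemma basis_mul_t (V : HWeylData K n B) (u : HMon n) :
    V.basis u * V.t = V.basis (u + tgen n) := by
  rw [add_tgen, basis_form, basis_form]
  have hc : Commute V.t (V.Xp u.2.1 * V.Dp u.2.2) :=
    Commute.mul_right (V.t_commute_Xp _) (V.t_commute_Dp _)
  rw [mul_assoc, ← hc.eq, ← mul_assoc, ← pow_succ]

lemma basis_mul_D (V : HWeylData K n B) (u : HMon n) (j : Fin n) :
    V.basis u * V.D j = V.basis (u + Dgen j) := by
  rw [add_Dgen, basis_form, basis_form]
  have h1 : V.Dp u.2.2 * V.D j = V.Dp (u.2.2 + Pi.single j 1) := by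
    rw [← V.Dp_single j, Dp_mul]
  rw [mul_assoc, mul_assoc, h1]

lemma basis_mul_x (V : HWeylData K n B) (u : HMon n) (j : Fin n) :
    V.basis u * V.x j = V.basis (u + xgen j)
      + (u.2.2 j) • V.basis (u.1 + 2, (u.2.1, u.2.2 - Pi.single j 1)) := by
  rw [add_xgen, basis_form, basis_form, basis_form]
  rw [mul_assoc, mul_assoc, V.Dp_mul_x]
  rw [mul_add, mul_add]
  congr 1
  · have h1 : V.Xp u.2.1 * (V.x j * V.Dp u.2.2) = V.Xp (u.2.1 + Pi.single j 1) * V.Dp u.2.2 := by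
      rw [← mul_assoc, ← (V.x_commute_Xp j u.2.1).eq, ← V.Xp_single j, Xp_mul]
      rw [add_comm (Pi.single j 1) u.2.1]
    rw [h1]
  · rw [mul_smul_comm, mul_smul_comm]
    congr 1
    have hc : Commute (V.t ^ 2) (V.Xp u.2.1) := ((V.t_commute_Xp u.2.1).pow_left 2)
    calc V.t ^ u.1 * (V.Xp u.2.1 * (V.t ^ 2 * V.Dp (u.2.2 - Pi.single j 1)))
        = V.t ^ u.1 * (V.Xp u.2.1 * V.t ^ 2 * V.Dp (u.2.2 - Pi.single j 1)) := by
          rw [mul_assoc (V.Xp u.2.1)]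
      _ = V.t ^ u.1 * (V.t ^ 2 * V.Xp u.2.1 * V.Dp (u.2.2 - Pi.single j 1)) := by
          rw [← hc.eq]
      _ = V.t ^ (u.1 + 2) * (V.Xp u.2.1 * V.Dp (u.2.2 - Pi.single j 1)) := by
          rw [pow_add]
          simp [mul_assoc]

end HWeylData

variable (W V δ r) in
/-- span of basis monomials strictly below `c` of the same total degree -/
def lowSpan (c : HMon n) : Submodule K B :=
  Submodule.span K (V.basis '' {u | rT W δ r u c ∧ hdeg u = hdeg c})

variable (W V δ r) in
/-- span of basis monomials strictly below `c` -/
def lowE (c : HMon n) : Submodule K B :=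
  Submodule.span K (V.basis '' {u | rT W δ r u c})

lemma lowSpan_le_lowE (c : HMon n) : lowSpan W V δ r c ≤ lowE W V δ r c :=
  Submodule.span_mono (Set.image_mono fun u hu => hu.1)

lemma lowE_mono (hr : WellMonomialOrdering r) {c₁ c₂ : HMon n} (h : rT W δ r c₁ c₂) :
    lowE W V δ r c₁ ≤ lowE W V δ r c₂ :=
  Submodule.span_mono (Set.image_mono fun u hu => rT_trans hr hu h)

lemma lowSpan_mono (hr : WellMonomialOrdering r) {c₁ c₂ : HMon n} (h : rT W δ r c₁ c₂)
    (hd : hdeg c₁ = hdeg c₂) : lowSpan W V δ r c₁ ≤ lowSpan W V δ r c₂ :=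
  Submodule.span_mono (Set.image_mono fun u hu => ⟨rT_trans hr hu.1 h, hu.2.trans hd⟩)

lemma basis_mem_lowSpan {c u : HMon n} (h : rT W δ r u c) (hd : hdeg u = hdeg c) :
    V.basis u ∈ lowSpan W V δ r c :=
  Submodule.subset_span ⟨u, ⟨h, hd⟩, rfl⟩

lemma hdeg_tgen : hdeg (tgen n) = 1 := by
  simp [tgen, hdeg, wdeg]

lemma hdeg_xgen (j : Fin n) : hdeg (xgen j) = 1 := by
  simp [xgen, hdeg, wdeg, Finset.sum_pi_single', Finset.mem_univ]

lemma hdeg_Dgen (j : Fin n) : hdeg (Dgen j) = 1 := by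
  simp [Dgen, hdeg, wdeg, Finset.sum_pi_single', Finset.mem_univ]

lemma hdeg_cm {u : HMon n} {j : Fin n} (hj : 0 < u.2.2 j) :
    hdeg ((u.1 + 2, (u.2.1, u.2.2 - Pi.single j 1)) : HMon n) = hdeg u + 1 := by
  have h := sum_sub_single (n := n) hj
  simp only [hdeg, wdeg]
  omega

/-- the key lemma about the commutator term -/
lemma basis_mul_x_diff (hδo : IsOrderFunction K δ) (hr : WellMonomialOrdering r)
    (u : HMon n) (j : Fin n) :
    V.basis u * V.x j - V.basis (u + xgen j) ∈ lowSpan W V δ r (u + xgen j) := by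
  rw [V.basis_mul_x u j, add_sub_cancel_left]
  rcases Nat.eq_zero_or_pos (u.2.2 j) with h0 | hpos
  · rw [h0, zero_smul]
    exact Submodule.zero_mem _
  · refine AddSubmonoid.nsmul_mem _ (basis_mem_lowSpan (V := V) (W := W) (δ := δ) (r := r) ?_ ?_) _
    · have h := rT_comm_term (W := W) (δ := δ) (r := r) hδo hr hpos
      rwa [← add_xgen] at h
    · rw [hdeg_cm hpos, hdeg_add, hdeg_xgen]

lemma lowSpan_mul_t (hδo : IsOrderFunction K δ) (hr : WellMonomialOrdering r) {c : HMon n}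
    {C : B} (hC : C ∈ lowSpan W V δ r c) :
    C * V.t ∈ lowSpan W V δ r (c + tgen n) := by
  refine Submodule.span_induction ?_ ?_ ?_ ?_ hC
  · rintro y ⟨u, ⟨hu, hud⟩, rfl⟩
    rw [V.basis_mul_t u]
    exact basis_mem_lowSpan (rT_add_right hδo hr _ hu)
      (by rw [hdeg_add, hdeg_add, hud])
  · rw [zero_mul]; exact Submodule.zero_mem _
  · intro a b _ _ ha hb
    rw [add_mul]; exact Submodule.add_mem _ ha hb
  · intro a x _ hx
    rw [smul_mul_assoc]; exact Submodule.smul_mem _ _ hx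

lemma lowSpan_mul_D (hδo : IsOrderFunction K δ) (hr : WellMonomialOrdering r) {c : HMon n}
    (j : Fin n) {C : B} (hC : C ∈ lowSpan W V δ r c) :
    C * V.D j ∈ lowSpan W V δ r (c + Dgen j) := by
  refine Submodule.span_induction ?_ ?_ ?_ ?_ hC
  · rintro y ⟨u, ⟨hu, hud⟩, rfl⟩
    rw [V.basis_mul_D u]
    exact basis_mem_lowSpan (rT_add_right hδo hr _ hu)
      (by rw [hdeg_add, hdeg_add, hud])
  · rw [zero_mul]; exact Submodule.zero_mem _
  · intro a b _ _ ha hb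
    rw [add_mul]; exact Submodule.add_mem _ ha hb
  · intro a x _ hx
    rw [smul_mul_assoc]; exact Submodule.smul_mem _ _ hx

lemma lowSpan_mul_x (hδo : IsOrderFunction K δ) (hr : WellMonomialOrdering r) {c : HMon n}
    (j : Fin n) {C : B} (hC : C ∈ lowSpan W V δ r c) :
    C * V.x j ∈ lowSpan W V δ r (c + xgen j) := by
  refine Submodule.span_induction ?_ ?_ ?_ ?_ hC
  · rintro y ⟨u, ⟨hu, hud⟩, rfl⟩
    have h1 := basis_mul_x_diff (V := V) (W := W) (δ := δ) (r := r) hδo hr u j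
    have h2 : rT W δ r (u + xgen j) (c + xgen j) := rT_add_right hδo hr _ hu
    have h3 : hdeg (u + xgen j) = hdeg (c + xgen j) := by rw [hdeg_add, hdeg_add, hud]
    have h4 : V.basis u * V.x j
        = (V.basis u * V.x j - V.basis (u + xgen j)) + V.basis (u + xgen j) := by abel
    rw [h4]
    exact Submodule.add_mem _ (lowSpan_mono hr h2 h3 h1) (basis_mem_lowSpan h2 h3)
  · rw [zero_mul]; exact Submodule.zero_mem _
  · intro a b _ _ ha hb
    rw [add_mul]; exact Submodule.add_mem _ ha hb
  · intro a x _ hx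
    rw [smul_mul_assoc]; exact Submodule.smul_mem _ _ hx

theorem key_lemma (hδo : IsOrderFunction K δ) (hr : WellMonomialOrdering r) :
    ∀ d : ℕ, ∀ w v : HMon n, hdeg w = d →
      V.basis v * V.basis w - V.basis (v + w) ∈ lowSpan W V δ r (v + w) := by
  intro d
  induction d using Nat.strong_induction_on with
  | _ d ih =>
    intro w v hwd
    by_cases hD : w.2.2 = 0
    · by_cases hX : w.2.1 = 0
      · by_cases hT : w.1 = 0
        · have hw0 : w = 0 := by
            refine Prod.ext hT (Prod.ext hX hD)
          rw [hw0, V.basis_zero, mul_one, add_zero, sub_self]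
          exact Submodule.zero_mem _
        · -- peel t
          set w' : HMon n := (w.1 - 1, w.2) with hw'
          have hsplit : w' + tgen n = w := by
            rw [add_tgen]
            refine Prod.ext ?_ rfl
            show w.1 - 1 + 1 = w.1
            omega
          have hdeg' : hdeg w' < d := by
            rw [← hwd]
            simp only [hdeg, hw']
            omega
          have hC' := ih (hdeg w') hdeg' w' v rfl
          have hb : V.basis w = V.basis w' * V.t := by rw [V.basis_mul_t, hsplit]
          have hcalc : V.basis v * V.basis w - V.basis (v + w)
              = (V.basis v * V.basis w' - V.basis (v + w')) * V.t := by
            rw [sub_mul, hb, ← mul_assoc, V.basis_mul_t (v + w'), add_assoc, hsplit]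
          rw [hcalc]
          have := lowSpan_mul_t (V := V) (W := W) (δ := δ) (r := r) hδo hr hC'
          rwa [add_assoc, hsplit] at this
      · -- peel x j
        obtain ⟨j, hj⟩ : ∃ j, w.2.1 j ≠ 0 := Function.ne_iff.1 hX
        set w' : HMon n := (w.1, (w.2.1 - Pi.single j 1, w.2.2)) with hw'
        have hsplit : w' + xgen j = w := by
          rw [add_xgen]
          refine Prod.ext rfl (Prod.ext ?_ rfl)
          show (w.2.1 - Pi.single j 1) + Pi.single j 1 = w.2.1
          exact sub_single_add (Nat.pos_of_ne_zero hj)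
        have hdeg' : hdeg w' < d := by
          rw [← hwd]
          have := sum_sub_single (n := n) (β := w.2.1) (j := j) (Nat.pos_of_ne_zero hj)
          simp only [hdeg, wdeg, hw']
          omega
        have hC' := ih (hdeg w') hdeg' w' v rfl
        have hb : V.basis w = V.basis w' * V.x j := by
          rw [V.basis_mul_x, hsplit]
          have : w'.2.2 j = 0 := by rw [hw']; exact congrFun hD j
          rw [this, zero_smul, add_zero]
        have hcalc : V.basis v * V.basis w - V.basis (v + w)
            = (V.basis v * V.basis w' - V.basis (v + w')) * V.x j
              + (V.basis (v + w') * V.x j - V.basis (v + w)) := by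
          rw [sub_mul, hb, ← mul_assoc]
          abel
        rw [hcalc]
        refine Submodule.add_mem _ ?_ ?_
        · have := lowSpan_mul_x (V := V) (W := W) (δ := δ) (r := r) hδo hr j hC'
          rwa [add_assoc, hsplit] at this
        · have := basis_mul_x_diff (V := V) (W := W) (δ := δ) (r := r) hδo hr (v + w') j
          rwa [add_assoc, hsplit] at this
    · -- peel D j
      obtain ⟨j, hj⟩ : ∃ j, w.2.2 j ≠ 0 := Function.ne_iff.1 hD
      set w' : HMon n := (w.1, (w.2.1, w.2.2 - Pi.single j 1)) with hw'
      have hsplit : w' + Dgen j = w := by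
        rw [add_Dgen]
        refine Prod.ext rfl (Prod.ext rfl ?_)
        show (w.2.2 - Pi.single j 1) + Pi.single j 1 = w.2.2
        exact sub_single_add (Nat.pos_of_ne_zero hj)
      have hdeg' : hdeg w' < d := by
        rw [← hwd]
        have := sum_sub_single (n := n) (β := w.2.2) (j := j) (Nat.pos_of_ne_zero hj)
        simp only [hdeg, wdeg, hw']
        omega
      have hC' := ih (hdeg w') hdeg' w' v rfl
      have hb : V.basis w = V.basis w' * V.D j := by rw [V.basis_mul_D, hsplit]
      have hcalc : V.basis v * V.basis w - V.basis (v + w)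
          = (V.basis v * V.basis w' - V.basis (v + w')) * V.D j := by
        rw [sub_mul, hb, ← mul_assoc, V.basis_mul_D (v + w'), add_assoc, hsplit]
      rw [hcalc]
      have := lowSpan_mul_D (V := V) (W := W) (δ := δ) (r := r) hδo hr j hC'
      rwa [add_assoc, hsplit] at this

end Prods
section Repr
variable {K : Type*} [Field K] {n : ℕ} {A B : Type*} [Ring A] [Algebra K A]
  [Ring B] [Algebra K B]
variable {W : WeylData K n A} {V : HWeylData K n B}
  {δ : A → WithBot ℤ} {r : WMon n → WMon n → Prop}

lemma NDH_basis (u : HMon n) : NDH V (V.basis u) = {u} := by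
  rw [NDH, V.basis.repr_self, Finsupp.support_single_ne_zero _ one_ne_zero]

lemma repr_eq_zero_of_not_mem_NDH {H : B} {u : HMon n} (h : u ∉ NDH V H) :
    V.basis.repr H u = 0 := Finsupp.notMem_support_iff.1 h

lemma NDH_sub_subset (H G : B) : NDH V (H - G) ⊆ NDH V H ∪ NDH V G := by
  rw [NDH, NDH, NDH, map_sub]
  exact Finsupp.support_sub

lemma NDH_add_subset (H G : B) : NDH V (H + G) ⊆ NDH V H ∪ NDH V G := by
  rw [NDH, NDH, NDH, map_add]
  exact Finsupp.support_add

lemma NDH_smul_subset (c : K) (H : B) : NDH V (c • H) ⊆ NDH V H := by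
  rw [NDH, NDH, map_smul]
  exact Finsupp.support_smul

lemma NDH_eq_empty_iff {H : B} : NDH V H = ∅ ↔ H = 0 := by
  rw [NDH, Finsupp.support_eq_empty, ← map_zero V.basis.repr]
  exact ⟨fun h => V.basis.repr.injective h, fun h => by rw [h, map_zero]⟩

lemma sum_NDH_repr (H : B) : ∑ v ∈ NDH V H, V.basis.repr H v • V.basis v = H := by
  have h := V.basis.linearCombination_repr H
  rw [Finsupp.linearCombination_apply, Finsupp.sum] at h
  exact h

lemma repr_eq_zero_of_lowE {C : B} {c u : HMon n} (hC : C ∈ lowE W V δ r c)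
    (hu : ¬ rT W δ r u c) : V.basis.repr C u = 0 := by
  have hsupp := V.basis.repr_support_subset_of_mem_span _ hC
  by_contra h
  exact hu (hsupp (Finsupp.mem_support_iff.2 h))

variable (W) in
theorem prod_decomp (hδo : IsOrderFunction K δ) (hr : WellMonomialOrdering r)
    {P : B} {E : HMon n} (hE : IsExpH V (rT W δ r) P E) (v : HMon n) :
    V.basis v * P - (V.basis.repr P E) • V.basis (v + E) ∈ lowE W V δ r (v + E) := by
  have h1 : V.basis v * P = ∑ w ∈ NDH V P, V.basis.repr P w • (V.basis v * V.basis w) := by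
    conv_lhs => rw [← sum_NDH_repr (V := V) P]
    rw [Finset.mul_sum]
    exact Finset.sum_congr rfl fun w _ => mul_smul_comm _ _ _
  have h2 : ∀ w, V.basis.repr P w • (V.basis v * V.basis w)
      = V.basis.repr P w • (V.basis v * V.basis w - V.basis (v + w))
        + V.basis.repr P w • V.basis (v + w) := by
    intro w
    rw [smul_sub]
    abel
  have h3 : ∑ w ∈ NDH V P, V.basis.repr P w • V.basis (v + w)
      = V.basis.repr P E • V.basis (v + E)
        + ∑ w ∈ (NDH V P).erase E, V.basis.repr P w • V.basis (v + w) :=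
    (Finset.add_sum_erase _ _ hE.1).symm
  have h4 : V.basis v * P - (V.basis.repr P E) • V.basis (v + E)
      = (∑ w ∈ NDH V P, V.basis.repr P w • (V.basis v * V.basis w - V.basis (v + w)))
        + ∑ w ∈ (NDH V P).erase E, V.basis.repr P w • V.basis (v + w) := by
    rw [h1]
    simp_rw [h2]
    rw [Finset.sum_add_distrib, h3]
    abel
  rw [h4]
  refine Submodule.add_mem _ (Submodule.sum_mem _ fun w hw => ?_)
    (Submodule.sum_mem _ fun w hw => ?_)
  · refine Submodule.smul_mem _ _ ?_
    have hkey := key_lemma (V := V) (W := W) (δ := δ) (r := r) hδo hr (hdeg w) w v rfl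
    rcases eq_or_ne w E with rfl | hne
    · exact lowSpan_le_lowE _ hkey
    · have hwE : rT W δ r w E := hE.2 w hw hne
      have hvw : rT W δ r (v + w) (v + E) := by
        have := rT_add_right (W := W) (δ := δ) hδo hr v hwE
        rwa [add_comm w v, add_comm E v] at this
      exact lowE_mono hr hvw (lowSpan_le_lowE _ hkey)
  · rw [Finset.mem_erase] at hw
    refine Submodule.smul_mem _ _ (Submodule.subset_span ⟨v + w, ?_, rfl⟩)
    have hwE : rT W δ r w E := hE.2 w hw.2 hw.1
    have := rT_add_right (W := W) (δ := δ) hδo hr v hwE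
    rwa [add_comm w v, add_comm E v] at this

variable (W) in
lemma repr_basis_mul_top (hδo : IsOrderFunction K δ) (hr : WellMonomialOrdering r)
    {P : B} {E : HMon n} (hE : IsExpH V (rT W δ r) P E) (v : HMon n) :
    V.basis.repr (V.basis v * P) (v + E) = V.basis.repr P E := by
  have hd := prod_decomp (V := V) W (δ := δ) (r := r) hδo hr hE v
  set C := V.basis v * P - (V.basis.repr P E) • V.basis (v + E) with hC
  have hsplit : V.basis v * P = C + (V.basis.repr P E) • V.basis (v + E) := by
    rw [hC]; abel
  rw [hsplit]
  simp only [map_add, map_smul, Finsupp.add_apply, Finsupp.smul_apply, V.basis.repr_self]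
  rw [repr_eq_zero_of_lowE hd (rT_irrefl hr _), zero_add, Finsupp.single_eq_same,
    smul_eq_mul, mul_one]

variable (W) in
lemma repr_basis_mul_zero (hδo : IsOrderFunction K δ) (hr : WellMonomialOrdering r)
    {P : B} {E : HMon n} (hE : IsExpH V (rT W δ r) P E) (v : HMon n)
    {u : HMon n} (hne : u ≠ v + E) (hlt : ¬ rT W δ r u (v + E)) :
    V.basis.repr (V.basis v * P) u = 0 := by
  have hd := prod_decomp (V := V) W (δ := δ) (r := r) hδo hr hE v
  set C := V.basis v * P - (V.basis.repr P E) • V.basis (v + E) with hC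
  have hsplit : V.basis v * P = C + (V.basis.repr P E) • V.basis (v + E) := by
    rw [hC]; abel
  rw [hsplit]
  simp only [map_add, map_smul, Finsupp.add_apply, Finsupp.smul_apply, V.basis.repr_self]
  rw [repr_eq_zero_of_lowE hd hlt, zero_add, Finsupp.single_eq_of_ne hne,
    smul_eq_mul, mul_zero]

end Repr
section Main
variable {K : Type*} [Field K] {n : ℕ} {A B : Type*} [Ring A] [Algebra K A]
  [Ring B] [Algebra K B]
variable {W : WeylData K n A} {V : HWeylData K n B}
  {δ : A → WithBot ℤ} {r : WMon n → WMon n → Prop}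

lemma exists_expH (hr : WellMonomialOrdering r) {H : B} (hH : H ≠ 0) :
    ∃ E, IsExpH V (rT W δ r) H E := by
  have hne : (NDH V H).Nonempty :=
    Finset.nonempty_iff_ne_empty.2 fun h => hH (NDH_eq_empty_iff.1 h)
  obtain ⟨E, hE, hmax⟩ := exists_rel_max (rel := rT W δ r)
    (fun a b c hab hbc => rT_trans hr hab hbc) (fun a b hab => rT_total hr hab) _ hne
  exact ⟨E, hE, hmax⟩

lemma sum_update_mul {m : ℕ} (Q : Fin m → B) (i₀ : Fin m) (z : B) (P : Fin m → B) :
    ∑ i, Function.update Q i₀ z i * P i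
      = z * P i₀ + ∑ i ∈ Finset.univ.erase i₀, Q i * P i := by
  rw [← Finset.add_sum_erase _ (fun i => Function.update Q i₀ z i * P i) (Finset.mem_univ i₀)]
  congr 1
  · rw [Function.update_self]
  · refine Finset.sum_congr rfl fun i hi => ?_
    rw [Function.update_of_ne (Finset.mem_erase.1 hi).1]

lemma sum_mul_split {m : ℕ} (Q : Fin m → B) (i₀ : Fin m) (P : Fin m → B) :
    ∑ i, Q i * P i = Q i₀ * P i₀ + ∑ i ∈ Finset.univ.erase i₀, Q i * P i :=
  (Finset.add_sum_erase _ (fun i => Q i * P i) (Finset.mem_univ i₀)).symm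

theorem division_exists (hδ : IsAdmissible W δ) (hr : WellMonomialOrdering r)
    (m : ℕ) (P : Fin m → B) (e : Fin m → HMon n)
    (hexp : ∀ i, IsExpH V (rT W δ r) (P i) (e i)) (H : B) :
    ∃ QR : (Fin m → B) × B,
      H = (∑ i, QR.1 i * P i) + QR.2 ∧
      (∀ i, ∀ v ∈ NDH V (QR.1 i),
        e i + v ∈ expCone (e i) \ ⋃ j ∈ Set.Iio i, expCone (e j)) ∧
      (∀ v ∈ NDH V QR.2, v ∈ (⋃ i, expCone (e i))ᶜ) := by
  classical
  have hδo : IsOrderFunction K δ := hδ.1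
  set rt := rT W δ r with hrt
  set Good : (Fin m → B) × B → B → Prop := fun QR H =>
      H = (∑ i, QR.1 i * P i) + QR.2 ∧
      (∀ i, ∀ v ∈ NDH V (QR.1 i),
        e i + v ∈ expCone (e i) \ ⋃ j ∈ Set.Iio i, expCone (e j)) ∧
      (∀ v ∈ NDH V QR.2, v ∈ (⋃ i, expCone (e i))ᶜ) with hGood
  have hzero : ∃ QR, Good QR 0 := by
    refine ⟨(0, 0), by simp, fun i v hv => ?_, fun v hv => ?_⟩
    · simp only [Pi.zero_apply, NDH, map_zero, Finsupp.support_zero] at hv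
      exact absurd hv (Finset.notMem_empty v)
    · simp only [NDH, map_zero, Finsupp.support_zero] at hv
      exact absurd hv (Finset.notMem_empty v)
  have main : ∀ E : HMon n, ∀ H : B, IsExpH V rt H E → ∃ QR, Good QR H := by
    intro E
    refine (rT_wf (W := W) (δ := δ) hr).induction
      (C := fun E => ∀ H : B, IsExpH V rt H E → ∃ QR, Good QR H) E ?_
    intro E ih H hHE
    have hcE : V.basis.repr H E ≠ 0 := Finsupp.mem_support_iff.1 hHE.1
    by_cases hE : ∃ i, E ∈ expCone (e i)
    · -- E is in some cone: reduce by P i₀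
      set s : Finset (Fin m) := Finset.univ.filter (fun i => E ∈ expCone (e i)) with hs
      have hsne : s.Nonempty := by
        obtain ⟨i, hi⟩ := hE
        exact ⟨i, by simp [hs, hi]⟩
      set i₀ := s.min' hsne with hi₀
      have hi₀cone : E ∈ expCone (e i₀) := by
        have := s.min'_mem hsne
        simp only [hs, Finset.mem_filter] at this
        exact this.2
      have hi₀min : ∀ j, j < i₀ → E ∉ expCone (e j) := by
        intro j hj hcone
        have hjs : j ∈ s := by simp [hs, hcone]
        exact absurd (s.min'_le j hjs) (not_le.2 hj)
      obtain ⟨γ, hγ⟩ := hi₀cone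
      set lc := V.basis.repr (P i₀) (e i₀) with hlc
      have hlcne : lc ≠ 0 := Finsupp.mem_support_iff.1 (hexp i₀).1
      set q : K := V.basis.repr H E * lc⁻¹ with hq
      set H' := H - q • (V.basis γ * P i₀) with hH'
      have htop : V.basis.repr (V.basis γ * P i₀) E = lc := by
        have := repr_basis_mul_top (V := V) W (δ := δ) (r := r) hδo hr (hexp i₀) γ
        rwa [add_comm γ (e i₀), ← hγ] at this
      have hrepr0 : V.basis.repr H' E = 0 := by
        rw [hH', map_sub, map_smul, Finsupp.sub_apply, Finsupp.smul_apply, htop,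
          hq, smul_eq_mul, mul_assoc, inv_mul_cancel₀ hlcne, mul_one, sub_self]
      have hsubE : ∀ u ∈ NDH V H', rt u E := by
        intro u hu
        by_contra hnot
        have hune : u ≠ E := by
          intro h
          rw [h] at hu
          exact Finsupp.mem_support_iff.1 hu hrepr0
        have h1 : V.basis.repr H u = 0 := by
          apply repr_eq_zero_of_not_mem_NDH
          intro hmem
          exact hnot (hHE.2 u hmem hune)
        have h2 : V.basis.repr (V.basis γ * P i₀) u = 0 := by
          refine repr_basis_mul_zero (V := V) W (δ := δ) (r := r) hδo hr (hexp i₀) γ ?_ ?_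
          · rwa [add_comm γ (e i₀), ← hγ]
          · rwa [add_comm γ (e i₀), ← hγ]
        have : V.basis.repr H' u = 0 := by
          rw [hH', map_sub, map_smul, Finsupp.sub_apply, Finsupp.smul_apply, h1, h2,
            smul_zero, sub_zero]
        exact Finsupp.mem_support_iff.1 hu this
      have hγmem : ∀ v ∈ NDH V (q • V.basis γ),
          e i₀ + v ∈ expCone (e i₀) \ ⋃ j ∈ Set.Iio i₀, expCone (e j) := by
        intro v hv
        have hvγ : v = γ := by
          have := NDH_smul_subset (V := V) q (V.basis γ) hv
          rw [NDH_basis] at this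
          exact Finset.mem_singleton.1 this
        subst hvγ
        constructor
        · exact ⟨v, rfl⟩
        · simp only [Set.mem_iUnion, Set.mem_Iio, not_exists]
          intro j hj hcone
          exact hi₀min j hj (hγ ▸ hcone)
      have hrw : H = H' + (q • V.basis γ) * P i₀ := by
        rw [hH', smul_mul_assoc]
        abel
      rcases eq_or_ne H' 0 with h0 | hne
      · refine ⟨(Function.update (0 : Fin m → B) i₀ (q • V.basis γ), 0), ?_, ?_, ?_⟩
        · dsimp only
          rw [hrw, h0, zero_add, add_zero, sum_update_mul]
          have hz : ∀ x ∈ Finset.univ.erase i₀, (0 : Fin m → B) x * P x = 0 := by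
            intro x _
            simp
          rw [Finset.sum_eq_zero hz, add_zero, smul_mul_assoc]
        · intro i v hv
          dsimp only at hv
          rcases eq_or_ne i i₀ with rfl | hii
          · rw [Function.update_self] at hv
            exact hγmem v hv
          · rw [Function.update_of_ne hii] at hv
            simp only [Pi.zero_apply, NDH, map_zero, Finsupp.support_zero] at hv
            exact absurd hv (Finset.notMem_empty v)
        · intro v hv
          simp only [NDH, map_zero, Finsupp.support_zero] at hv
          exact absurd hv (Finset.notMem_empty v)
      · obtain ⟨E', hE'⟩ := exists_expH (V := V) (W := W) (δ := δ) hr hne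
        have hE'lt : rt E' E := hsubE E' hE'.1
        obtain ⟨⟨Q', R'⟩, hsum', hQ', hR'⟩ := ih E' hE'lt H' hE'
        refine ⟨(Function.update Q' i₀ (Q' i₀ + q • V.basis γ), R'), ?_, ?_, ?_⟩
        · dsimp only
          dsimp only at hsum'
          rw [hrw, hsum', sum_update_mul, sum_mul_split Q' i₀ P, add_mul]
          abel
        · intro i v hv
          dsimp only at hv
          rcases eq_or_ne i i₀ with rfl | hii
          · rw [Function.update_self] at hv
            rcases Finset.mem_union.1 (NDH_add_subset _ _ hv) with h | h
            · exact hQ' i₀ v h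
            · exact hγmem v h
          · rw [Function.update_of_ne hii] at hv
            exact hQ' i v hv
        · exact hR'
    · -- E is in no cone: move to remainder
      push_neg at hE
      set c := V.basis.repr H E with hc
      set H' := H - c • V.basis E with hH'
      have hrepr0 : V.basis.repr H' E = 0 := by
        rw [hH', map_sub, map_smul, Finsupp.sub_apply, Finsupp.smul_apply,
          V.basis.repr_self, Finsupp.single_eq_same, smul_eq_mul, mul_one, sub_self]
      have hsubE : ∀ u ∈ NDH V H', rt u E := by
        intro u hu
        by_contra hnot
        have hune : u ≠ E := by
          intro h
          rw [h] at hu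
          exact Finsupp.mem_support_iff.1 hu hrepr0
        have h1 : V.basis.repr H u = 0 := by
          apply repr_eq_zero_of_not_mem_NDH
          intro hmem
          exact hnot (hHE.2 u hmem hune)
        have : V.basis.repr H' u = 0 := by
          rw [hH', map_sub, map_smul, Finsupp.sub_apply, Finsupp.smul_apply,
            V.basis.repr_self, Finsupp.single_eq_of_ne hune, h1,
            smul_zero, sub_zero]
        exact Finsupp.mem_support_iff.1 hu this
      have hEmem : ∀ v ∈ NDH V (c • V.basis E), v ∈ (⋃ i, expCone (e i))ᶜ := by
        intro v hv
        have hvE : v = E := by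
          have := NDH_smul_subset (V := V) c (V.basis E) hv
          rw [NDH_basis] at this
          exact Finset.mem_singleton.1 this
        subst hvE
        simp only [Set.mem_compl_iff, Set.mem_iUnion, not_exists]
        exact fun i hi => hE i hi
      have hrw : H = H' + c • V.basis E := by rw [hH']; abel
      rcases eq_or_ne H' 0 with h0 | hne
      · refine ⟨(0, c • V.basis E), ?_, ?_, hEmem⟩
        · dsimp only
          rw [hrw, h0, zero_add]
          simp
        · intro i v hv
          simp only [Pi.zero_apply, NDH, map_zero, Finsupp.support_zero] at hv
          exact absurd hv (Finset.notMem_empty v)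
      · obtain ⟨E', hE'⟩ := exists_expH (V := V) (W := W) (δ := δ) hr hne
        have hE'lt : rt E' E := hsubE E' hE'.1
        obtain ⟨⟨Q', R'⟩, hsum', hQ', hR'⟩ := ih E' hE'lt H' hE'
        refine ⟨(Q', R' + c • V.basis E), ?_, hQ', ?_⟩
        · rw [hrw, hsum']
          abel
        · intro v hv
          rcases Finset.mem_union.1 (NDH_add_subset _ _ hv) with h | h
          · exact hR' v h
          · exact hEmem v h
  rcases eq_or_ne H 0 with rfl | hne
  · exact hzero
  · obtain ⟨E, hEH⟩ := exists_expH (V := V) (W := W) (δ := δ) hr hne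
    exact main E H hEH

theorem division_unique_zero (hδ : IsAdmissible W δ) (hr : WellMonomialOrdering r)
    (m : ℕ) (P : Fin m → B) (e : Fin m → HMon n)
    (hexp : ∀ i, IsExpH V (rT W δ r) (P i) (e i))
    (q : Fin m → B) (ρ : B)
    (hsum : (∑ i, q i * P i) + ρ = 0)
    (hq : ∀ i, ∀ v ∈ NDH V (q i),
      e i + v ∈ expCone (e i) \ ⋃ j ∈ Set.Iio i, expCone (e j))
    (hρ : ∀ v ∈ NDH V ρ, v ∈ (⋃ i, expCone (e i))ᶜ) :
    (∀ i, q i = 0) ∧ ρ = 0 := by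
  classical
  have hδo : IsOrderFunction K δ := hδ.1
  by_contra hcon
  set T : Finset (HMon n) :=
    (Finset.univ.biUnion fun i => (NDH V (q i)).image (fun v => e i + v)) ∪ NDH V ρ with hT
  have hTne : T.Nonempty := by
    rw [not_and_or] at hcon
    rcases hcon with h | h
    · push_neg at h
      obtain ⟨i, hi⟩ := h
      have : (NDH V (q i)).Nonempty :=
        Finset.nonempty_iff_ne_empty.2 fun hh => hi (NDH_eq_empty_iff.1 hh)
      obtain ⟨v, hv⟩ := this
      exact ⟨e i + v, Finset.mem_union_left _ (Finset.mem_biUnion.2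
        ⟨i, Finset.mem_univ i, Finset.mem_image.2 ⟨v, hv, rfl⟩⟩)⟩
    · have : (NDH V ρ).Nonempty :=
        Finset.nonempty_iff_ne_empty.2 fun hh => h (NDH_eq_empty_iff.1 hh)
      obtain ⟨v, hv⟩ := this
      exact ⟨v, Finset.mem_union_right _ hv⟩
  obtain ⟨E, hET, hEmax⟩ := exists_rel_max (rel := rT W δ r)
    (fun a b c hab hbc => rT_trans hr hab hbc) (fun a b hab => rT_total hr hab) T hTne
  have hnotlt : ∀ u ∈ T, ¬ rT W δ r E u := by
    intro u hu hEu
    rcases eq_or_ne u E with rfl | hne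
    · exact rT_irrefl hr u hEu
    · exact rT_irrefl hr E (rT_trans hr hEu (hEmax u hu hne))
  -- coefficient of q i * P i at E
  have hqP : ∀ i, V.basis.repr (q i * P i) E
      = ∑ v ∈ NDH V (q i), V.basis.repr (q i) v * V.basis.repr (V.basis v * P i) E := by
    intro i
    have h1 : q i * P i = ∑ v ∈ NDH V (q i), V.basis.repr (q i) v • (V.basis v * P i) := by
      conv_lhs => rw [← sum_NDH_repr (V := V) (q i)]
      rw [Finset.sum_mul]
      exact Finset.sum_congr rfl fun v _ => smul_mul_assoc _ _ _
    rw [h1, map_sum, Finsupp.finset_sum_apply]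
    exact Finset.sum_congr rfl fun v _ => by
      rw [map_smul, Finsupp.smul_apply, smul_eq_mul]
  have hterm0 : ∀ i, ∀ v ∈ NDH V (q i), e i + v ≠ E →
      V.basis.repr (V.basis v * P i) E = 0 := by
    intro i v hv hne
    have hmem : e i + v ∈ T := Finset.mem_union_left _ (Finset.mem_biUnion.2
      ⟨i, Finset.mem_univ i, Finset.mem_image.2 ⟨v, hv, rfl⟩⟩)
    refine repr_basis_mul_zero (V := V) W (δ := δ) (r := r) hδo hr (hexp i) v ?_ ?_
    · rw [add_comm v (e i)]
      exact fun h => hne h.symm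
    · rw [add_comm v (e i)]
      exact hnotlt _ hmem
  have hzero_i : ∀ i, (¬ ∃ v ∈ NDH V (q i), e i + v = E) →
      V.basis.repr (q i * P i) E = 0 := by
    intro i h
    rw [hqP i]
    refine Finset.sum_eq_zero fun v hv => ?_
    have : e i + v ≠ E := fun hh => h ⟨v, hv, hh⟩
    rw [hterm0 i v hv this, mul_zero]
  have hrepr_sum : (∑ i, V.basis.repr (q i * P i) E) + V.basis.repr ρ E = 0 := by
    have h := congrArg (fun X => V.basis.repr X E) hsum
    simpa only [map_add, map_sum, Finsupp.add_apply, Finsupp.finset_sum_apply,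
      map_zero, Finsupp.coe_zero, Pi.zero_apply] using h
  rcases Finset.mem_union.1 hET with hEq | hEρ
  · -- E comes from some q i₀
    obtain ⟨i₀, -, hEim⟩ := Finset.mem_biUnion.1 hEq
    obtain ⟨v₀, hv₀, hv₀E⟩ := Finset.mem_image.1 hEim
    have hEΔ : E ∈ expCone (e i₀) \ ⋃ j ∈ Set.Iio i₀, expCone (e j) := hv₀E ▸ hq i₀ v₀ hv₀
    -- coefficient from i₀ is nonzero
    have hlc : V.basis.repr (P i₀) (e i₀) ≠ 0 := Finsupp.mem_support_iff.1 (hexp i₀).1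
    have hi₀ : V.basis.repr (q i₀ * P i₀) E
        = V.basis.repr (q i₀) v₀ * V.basis.repr (P i₀) (e i₀) := by
      rw [hqP i₀]
      refine Finset.sum_eq_single_of_mem v₀ hv₀ ?_ |>.trans ?_
      · intro v hv hne
        have : e i₀ + v ≠ E := by
          rw [← hv₀E]
          exact fun hh => hne (add_left_cancel hh)
        rw [hterm0 i₀ v hv this, mul_zero]
      · have := repr_basis_mul_top (V := V) W (δ := δ) (r := r) hδo hr (hexp i₀) v₀
        rw [add_comm v₀ (e i₀), hv₀E] at this
        rw [this]
    have hi₀ne : V.basis.repr (q i₀ * P i₀) E ≠ 0 := by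
      rw [hi₀]
      exact mul_ne_zero (Finsupp.mem_support_iff.1 hv₀) hlc
    have hothers : ∀ i, i ≠ i₀ → V.basis.repr (q i * P i) E = 0 := by
      intro i hi
      refine hzero_i i ?_
      rintro ⟨v, hv, hvE⟩
      have hEΔi : E ∈ expCone (e i) \ ⋃ j ∈ Set.Iio i, expCone (e j) := hvE ▸ hq i v hv
      rcases lt_or_gt_of_ne hi with hlt | hlt
      · -- i < i₀ : E ∈ cone i contradicts E ∈ Δ i₀
        have := hEΔ.2
        simp only [Set.mem_iUnion, Set.mem_Iio, not_exists] at this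
        exact this i hlt hEΔi.1
      · have := hEΔi.2
        simp only [Set.mem_iUnion, Set.mem_Iio, not_exists] at this
        exact this i₀ hlt hEΔ.1
    have hρ0 : V.basis.repr ρ E = 0 := by
      apply repr_eq_zero_of_not_mem_NDH
      intro hmem
      have := hρ E hmem
      simp only [Set.mem_compl_iff, Set.mem_iUnion, not_exists] at this
      exact this i₀ hEΔ.1
    rw [Finset.sum_eq_single_of_mem i₀ (Finset.mem_univ i₀)
      (fun i _ hi => hothers i hi), hρ0, add_zero] at hrepr_sum
    exact hi₀ne hrepr_sum
  · -- E comes from ρ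
    have hρne : V.basis.repr ρ E ≠ 0 := Finsupp.mem_support_iff.1 hEρ
    have hcompl := hρ E hEρ
    simp only [Set.mem_compl_iff, Set.mem_iUnion, not_exists] at hcompl
    have hall : ∀ i, V.basis.repr (q i * P i) E = 0 := by
      intro i
      refine hzero_i i ?_
      rintro ⟨v, hv, hvE⟩
      have := (hvE ▸ hq i v hv).1
      exact hcompl i this
    rw [Finset.sum_eq_zero fun i _ => hall i, zero_add] at hrepr_sum
    exact hρne hrepr_sum

end Main
/-- division theorem in `A_n[t]`: given nonzero `P₁,…,P_r ∈ A_n[t]` with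
`⊲`-exponents `e₁,…,e_r`, and the partition `Δᵢ = (eᵢ + ℕ^{2n+1}) \ ∪_{j<i} Δⱼ`,
`Δ̄ = ℕ^{2n+1} \ ∪ᵢ Δᵢ`, every `H ∈ A_n[t]` has a unique expression
`H = Σ Qᵢ Pᵢ + R` with `eᵢ + N(Qᵢ) ⊆ Δᵢ` and `N(R) ⊆ Δ̄`. -/
theorem division_theorem (K : Type*) [Field K] (n : ℕ) (A B : Type*) [Ring A]
    [Algebra K A] [Ring B] [Algebra K B] (W : WeylData K n A) (V : HWeylData K n B)
    (δ : A → WithBot ℤ) (hδ : IsAdmissible W δ)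
    (r : WMon n → WMon n → Prop) (hr : WellMonomialOrdering r)
    (m : ℕ) (P : Fin m → B) (hP : ∀ i, P i ≠ 0) (e : Fin m → HMon n)
    (hexp : ∀ i, IsExpH V (rT W δ r) (P i) (e i)) (H : B) :
    ∃! QR : (Fin m → B) × B,
      H = (∑ i, QR.1 i * P i) + QR.2 ∧
      (∀ i, ∀ v ∈ NDH V (QR.1 i),
        e i + v ∈ expCone (e i) \ ⋃ j ∈ Set.Iio i, expCone (e j)) ∧
      (∀ v ∈ NDH V QR.2, v ∈ (⋃ i, expCone (e i))ᶜ) := by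
  classical
  obtain ⟨QR, h1, h2, h3⟩ := division_exists (V := V) hδ hr m P e hexp H
  refine ⟨QR, ⟨h1, h2, h3⟩, ?_⟩
  rintro ⟨Q2, R2⟩ ⟨g1, g2, g3⟩
  dsimp only at g1 g2 g3
  have hsum : (∑ i, (Q2 i - QR.1 i) * P i) + (R2 - QR.2) = 0 := by
    have heq : (∑ i, Q2 i * P i) + R2 = (∑ i, QR.1 i * P i) + QR.2 := by
      rw [← g1, ← h1]
    calc (∑ i, (Q2 i - QR.1 i) * P i) + (R2 - QR.2)
        = ((∑ i, Q2 i * P i) + R2) - ((∑ i, QR.1 i * P i) + QR.2) := by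
          simp only [sub_mul, Finset.sum_sub_distrib]
          abel
      _ = 0 := by rw [heq, sub_self]
  have hqcond : ∀ i, ∀ v ∈ NDH V (Q2 i - QR.1 i),
      e i + v ∈ expCone (e i) \ ⋃ j ∈ Set.Iio i, expCone (e j) := by
    intro i v hv
    rcases Finset.mem_union.1 (NDH_sub_subset _ _ hv) with h | h
    · exact g2 i v h
    · exact h2 i v h
  have hrcond : ∀ v ∈ NDH V (R2 - QR.2), v ∈ (⋃ i, expCone (e i))ᶜ := by
    intro v hv
    rcases Finset.mem_union.1 (NDH_sub_subset _ _ hv) with h | h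
    · exact g3 v h
    · exact h3 v h
  obtain ⟨hq0, hρ0⟩ := division_unique_zero (V := V) hδ hr m P e hexp _ _ hsum hqcond hrcond
  have hQ : Q2 = QR.1 := funext fun i => sub_eq_zero.1 (hq0 i)
  have hR : R2 = QR.2 := sub_eq_zero.1 hρ0
  exact Prod.ext hQ hR
end

section
/- Let I be a nonzero left ideal of A_n(K) with generators P_1,...,P_m, and let Ĩ be the left ideal of A_n[t] generated by h(P_1),...,h(P_m). Then π(Exp_δ(Ĩ)) = Exp_δ(I), where π: ℕ^{2n+1} → ℕ^{2n} forgets the t-coordinate. The same equality holds with Ĩ replaced by the full homogenised ideal h(I) generated by {h(P) : P ∈ I}. -/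
namespace Exp19

section Generic
variable {R : Type*} [Ring R]

/-- `x^α` as a list product. -/
def xpl {n : ℕ} (x : Fin n → R) (α : Fin n → ℕ) : R := (List.ofFn fun i => x i ^ α i).prod

lemma wmono_eq {n : ℕ} (x D : Fin n → R) (ab : WMon n) :
    wmono x D ab = xpl x ab.1 * xpl D ab.2 := rfl

lemma commute_xpl {n : ℕ} {c : R} {x : Fin n → R} (h : ∀ i, Commute c (x i))
    (α : Fin n → ℕ) : Commute c (xpl x α) := by
  apply Commute.list_prod_right
  intro y hy
  rw [List.mem_ofFn] at hy
  obtain ⟨i, rfl⟩ := hy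
  exact (h i).pow_right _

lemma xpl_zero {n : ℕ} (x : Fin n → R) : xpl x 0 = 1 := by
  apply List.prod_eq_one
  intro y hy
  rw [List.mem_ofFn] at hy
  obtain ⟨i, rfl⟩ := hy
  simp

lemma xpl_succ {n : ℕ} (x : Fin (n+1) → R) (α : Fin (n+1) → ℕ) :
    xpl x α = x 0 ^ α 0 * xpl (fun j => x j.succ) (fun j => α j.succ) := by
  rw [xpl, List.ofFn_succ, List.prod_cons]; rfl

lemma xpl_add_single {n : ℕ} (x : Fin n → R) (hxx : ∀ i j, Commute (x i) (x j))
    (i : Fin n) (α : Fin n → ℕ) :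
    xpl x (α + Pi.single i 1) = x i * xpl x α := by
  induction n with
  | zero => exact i.elim0
  | succ m ih =>
    rw [xpl_succ, xpl_succ x α]
    induction i using Fin.cases with
    | zero =>
      have h1 : (α + Pi.single 0 1 : Fin (m+1) → ℕ) 0 = α 0 + 1 := by simp
      have h2 : (fun j : Fin m => (α + Pi.single 0 1 : Fin (m+1) → ℕ) j.succ)
          = fun j => α j.succ := by
        funext j
        simp [Pi.single_apply, (Fin.succ_ne_zero j)]
      rw [h1, h2, pow_succ', mul_assoc]
    | succ i' =>
      have h1 : (α + Pi.single i'.succ 1 : Fin (m+1) → ℕ) 0 = α 0 := by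
        simp [Pi.single_apply, (Fin.succ_ne_zero i').symm]
      have h2 : (fun j : Fin m => (α + Pi.single i'.succ 1 : Fin (m+1) → ℕ) j.succ)
          = (fun j => α j.succ) + Pi.single i' 1 := by
        funext j
        simp [Pi.single_apply, Fin.succ_inj]
      rw [h1, h2, ih (fun j => x j.succ) (fun i j => hxx _ _) i' (fun j => α j.succ),
        ← mul_assoc, ((hxx 0 i'.succ).pow_left (α 0)).eq, mul_assoc]

lemma D_mul_pow_succ {D y c : R} (hc : Commute c y) (hD : D * y = y * D + c) (k : ℕ) :
    D * y ^ (k+1) = y ^ (k+1) * D + (k+1) • (y ^ k * c) := by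
  induction k with
  | zero => simpa using hD
  | succ k ih =>
    have e1 : D * y ^ (k+1+1) = (D * y^(k+1)) * y := by rw [pow_succ, ← mul_assoc]
    rw [e1, ih]
    simp only [hD, hc.eq, mul_add, add_mul, mul_assoc, smul_mul_assoc, mul_smul_comm,
      pow_succ, succ_nsmul]
    abel

lemma D_mul_pow {D y c : R} (hc : Commute c y) (hD : D * y = y * D + c) (k : ℕ) :
    D * y ^ k = y ^ k * D + k • (y ^ (k-1) * c) := by
  cases k with
  | zero => simp
  | succ k => simpa using D_mul_pow_succ hc hD k

lemma D_mul_xpl {n : ℕ} (x : Fin n → R) (D c : R) (hxx : ∀ i j, Commute (x i) (x j))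
    (hc : ∀ j, Commute c (x j)) (i : Fin n) (hDxi : D * x i = x i * D + c)
    (hDxj : ∀ j, j ≠ i → Commute D (x j)) (α : Fin n → ℕ) :
    D * xpl x α = xpl x α * D + (α i) • (xpl x (α - Pi.single i 1) * c) := by
  induction n with
  | zero => exact i.elim0
  | succ m ih =>
    have hcrest : Commute c (xpl (fun j => x j.succ) (fun j => α j.succ)) :=
      commute_xpl (fun j => hc j.succ) _
    induction i using Fin.cases with
    | zero =>
      have hDrest : Commute D (xpl (fun j => x j.succ) (fun j => α j.succ)) :=
        commute_xpl (fun j => hDxj j.succ (Fin.succ_ne_zero j)) _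
      have h1 : (α - Pi.single 0 1 : Fin (m+1) → ℕ) 0 = α 0 - 1 := by simp
      have h2 : (fun j : Fin m => (α - Pi.single 0 1 : Fin (m+1) → ℕ) j.succ)
          = fun j => α j.succ := by
        funext j
        simp [Pi.single_apply, (Fin.succ_ne_zero j)]
      rw [xpl_succ x α, xpl_succ x (α - Pi.single 0 1), h1, h2, ← mul_assoc,
        D_mul_pow (hc 0) hDxi (α 0)]
      simp only [add_mul, smul_mul_assoc, mul_assoc, hDrest.eq, hcrest.eq]
    | succ i' =>
      have h1 : (α - Pi.single i'.succ 1 : Fin (m+1) → ℕ) 0 = α 0 := by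
        simp [Pi.single_apply, (Fin.succ_ne_zero i').symm]
      have h2 : (fun j : Fin m => (α - Pi.single i'.succ 1 : Fin (m+1) → ℕ) j.succ)
          = (fun j => α j.succ) - Pi.single i' 1 := by
        funext j
        simp [Pi.single_apply, Fin.succ_inj]
      have hD0 : Commute D (x 0 ^ α 0) :=
        (hDxj 0 (Ne.symm (Fin.succ_ne_zero i'))).pow_right _
      have ih' := ih (fun j => x j.succ) (fun i j => hxx _ _) (fun j => hc j.succ) i' hDxi
        (fun j hj => hDxj j.succ (by simpa [Fin.succ_inj] using hj)) (fun j => α j.succ)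
      rw [xpl_succ x α, xpl_succ x (α - Pi.single i'.succ 1), h1, h2, ← mul_assoc,
        hD0.eq, mul_assoc, ih']
      simp only [mul_add, mul_smul_comm, mul_assoc]

end Generic
end Exp19
namespace Exp19
section Main
variable {K : Type*} [Field K] {n : ℕ} {A B : Type*} [Ring A] [Algebra K A] [Ring B] [Algebra K B]
variable (W : WeylData K n A) (V : HWeylData K n B)

lemma bm_t (v : HMon n) : V.t * V.basis v = V.basis (v.1 + 1, v.2) := by
  rw [V.basis_eq, V.basis_eq, ← mul_assoc, ← pow_succ']

lemma bm_x (i : Fin n) (k : ℕ) (α β : Fin n → ℕ) :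
    V.x i * V.basis (k, (α, β)) = V.basis (k, (α + Pi.single i 1, β)) := by
  have hxt : Commute (V.x i) (V.t ^ k) := Commute.pow_right (Eq.symm (V.htx i)) k
  rw [V.basis_eq, V.basis_eq, wmono_eq, wmono_eq]
  dsimp only
  rw [← mul_assoc, hxt.eq, mul_assoc, ← mul_assoc (V.x i),
    ← xpl_add_single V.x V.hxx i α]

lemma bm_D (i : Fin n) (k : ℕ) (α β : Fin n → ℕ) :
    V.D i * V.basis (k, (α, β)) =
      V.basis (k, (α, β + Pi.single i 1)) + (α i) • V.basis (k + 2, (α - Pi.single i 1, β)) := by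
  have hc : ∀ j, Commute (V.t ^ 2) (V.x j) :=
    fun j => Commute.pow_left (V.htx j) 2
  have hDxi : V.D i * V.x i = V.x i * V.D i + V.t ^ 2 := by simpa using V.hDx i i
  have hDxj : ∀ j, j ≠ i → Commute (V.D i) (V.x j) := by
    intro j hj
    have h := V.hDx i j
    rw [if_neg (Ne.symm hj), add_zero] at h
    exact h
  have hXD := D_mul_xpl V.x (V.D i) (V.t ^ 2) V.hxx hc i hDxi hDxj α
  have hDt : Commute (V.D i) (V.t ^ k) := Commute.pow_right (Eq.symm (V.htD i)) k
  have hDd : V.D i * xpl V.D β = xpl V.D (β + Pi.single i 1) :=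
    (xpl_add_single V.D V.hDD i β).symm
  have hX2 : Commute (V.t ^ 2) (xpl V.x (α - Pi.single i 1)) := commute_xpl hc _
  rw [V.basis_eq, V.basis_eq, V.basis_eq, wmono_eq, wmono_eq, wmono_eq]
  dsimp only
  rw [← mul_assoc, hDt.eq, mul_assoc, ← mul_assoc (V.D i), hXD, add_mul, smul_mul_assoc,
    mul_assoc (xpl V.x α), hDd, mul_assoc (xpl V.x (α - Pi.single i 1)),
    ← mul_assoc (xpl V.x (α - Pi.single i 1)), ← hX2.eq, mul_assoc (V.t ^ 2), mul_add,
    mul_smul_comm, ← mul_assoc (V.t ^ k) (V.t ^ 2), ← pow_add]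

lemma am_x (i : Fin n) (α β : Fin n → ℕ) :
    W.x i * W.basis (α, β) = W.basis (α + Pi.single i 1, β) := by
  rw [W.basis_eq, W.basis_eq, wmono_eq, wmono_eq]
  dsimp only
  rw [← mul_assoc, ← xpl_add_single W.x W.hxx i α]

lemma am_D (i : Fin n) (α β : Fin n → ℕ) :
    W.D i * W.basis (α, β) =
      W.basis (α, β + Pi.single i 1) + (α i) • W.basis (α - Pi.single i 1, β) := by
  have hDxi : W.D i * W.x i = W.x i * W.D i + 1 := by simpa using W.hDx i i
  have hDxj : ∀ j, j ≠ i → Commute (W.D i) (W.x j) := by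
    intro j hj
    have h := W.hDx i j
    rw [if_neg (Ne.symm hj), add_zero] at h
    exact h
  have hXD := D_mul_xpl W.x (W.D i) 1 W.hxx (fun j => Commute.one_left _) i hDxi hDxj α
  have hDd : W.D i * xpl W.D β = xpl W.D (β + Pi.single i 1) :=
    (xpl_add_single W.D W.hDD i β).symm
  rw [W.basis_eq, W.basis_eq, W.basis_eq, wmono_eq, wmono_eq, wmono_eq]
  dsimp only
  rw [← mul_assoc, hXD, mul_one, add_mul, smul_mul_assoc, mul_assoc (xpl W.x α), hDd]

end Main
end Exp19
namespace Exp19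
section Main2
variable {K : Type*} [Field K] {n : ℕ} {A B : Type*} [Ring A] [Algebra K A] [Ring B] [Algebra K B]
variable (W : WeylData K n A) (V : HWeylData K n B)

lemma sum_add_single (α : Fin n → ℕ) (i : Fin n) :
    (∑ j, (α + Pi.single i 1 : Fin n → ℕ) j) = (∑ j, α j) + 1 := by
  simp [Finset.sum_add_distrib, Finset.sum_pi_single']

lemma sub_add_single {α : Fin n → ℕ} {i : Fin n} (h : α i ≠ 0) :
    (α - Pi.single i 1 : Fin n → ℕ) + Pi.single i 1 = α := by
  funext j
  by_cases hj : j = i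
  · subst hj
    simp [Nat.sub_add_cancel (Nat.one_le_iff_ne_zero.mpr h)]
  · simp [Pi.single_apply, hj]

lemma sum_sub_single {α : Fin n → ℕ} {i : Fin n} (h : α i ≠ 0) :
    (∑ j, (α - Pi.single i 1 : Fin n → ℕ) j) = (∑ j, α j) - 1 := by
  have := congrArg (fun f : Fin n → ℕ => ∑ j, f j) (sub_add_single h)
  rw [sum_add_single] at this
  omega

lemma multiindex_induction {p : (Fin n → ℕ) → Prop} (h0 : p 0)
    (hstep : ∀ (i : Fin n) α, p α → p (α + Pi.single i 1)) (α : Fin n → ℕ) : p α := by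
  suffices h : ∀ s (α : Fin n → ℕ), (∑ j, α j) = s → p α from h _ α rfl
  intro s
  induction s with
  | zero =>
    intro α hα
    have hz : α = 0 := by
      funext j
      exact (Finset.sum_eq_zero_iff.mp hα) j (Finset.mem_univ j)
    rw [hz]; exact h0
  | succ s ih =>
    intro α hα
    have hne : ∃ i, α i ≠ 0 := by
      by_contra h
      push_neg at h
      rw [Finset.sum_eq_zero (fun j _ => h j)] at hα
      omega
    obtain ⟨i, hi⟩ := hne
    have hsum : (∑ j, (α - Pi.single i 1 : Fin n → ℕ) j) = s := by
      rw [sum_sub_single hi, hα]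
      omega
    rw [← sub_add_single hi]
    exact hstep i _ (ih _ hsum)

lemma basis_ind {ι M : Type*} [AddCommMonoid M] [Module K M] (b : Module.Basis ι K M)
    {p : M → Prop} (h0 : p 0) (hb : ∀ v, p (b v)) (hadd : ∀ x y, p x → p y → p (x + y))
    (hsmul : ∀ (c : K) x, p x → p (c • x)) (H : M) : p H := by
  have hmem : H ∈ Submodule.span K (Set.range b) := by
    rw [b.span_eq]; exact Submodule.mem_top
  exact Submodule.span_induction (fun x hx => by obtain ⟨v, rfl⟩ := hx; exact hb v) h0
    (fun x y _ _ hx hy => hadd x y hx hy) (fun c x _ hx => hsmul c x hx) hmem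

/-- The dehomogenisation as a linear map. -/
noncomputable def dh : B →ₗ[K] A := V.basis.constr K fun v => W.basis v.2

lemma dh_basis (v : HMon n) : dh W V (V.basis v) = W.basis v.2 :=
  V.basis.constr_basis K _ v

lemma dh_t (H : B) : dh W V (V.t * H) = dh W V H := by
  induction H using basis_ind (b := V.basis) with
  | h0 => simp
  | hb v => rw [bm_t, dh_basis, dh_basis]
  | hadd x y hx hy => rw [mul_add, map_add, map_add, hx, hy]
  | hsmul c x hx => rw [Algebra.mul_smul_comm, map_smul, map_smul, hx]

lemma dh_x (i : Fin n) (H : B) : dh W V (V.x i * H) = W.x i * dh W V H := by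
  induction H using basis_ind (b := V.basis) with
  | h0 => simp
  | hb v =>
    obtain ⟨k, α, β⟩ := v
    rw [bm_x, dh_basis, dh_basis]
    exact (am_x W i α β).symm
  | hadd x y hx hy => rw [mul_add, map_add, hx, hy, map_add, mul_add]
  | hsmul c x hx => rw [Algebra.mul_smul_comm, map_smul, map_smul, hx, Algebra.mul_smul_comm]

lemma dh_D (i : Fin n) (H : B) : dh W V (V.D i * H) = W.D i * dh W V H := by
  induction H using basis_ind (b := V.basis) with
  | h0 => simp
  | hb v =>
    obtain ⟨k, α, β⟩ := v
    rw [bm_D, map_add, map_nsmul, dh_basis, dh_basis, dh_basis]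
    exact (am_D W i α β).symm
  | hadd x y hx hy => rw [mul_add, map_add, hx, hy, map_add, mul_add]
  | hsmul c x hx => rw [Algebra.mul_smul_comm, map_smul, map_smul, hx, Algebra.mul_smul_comm]

lemma dh_tpow (k : ℕ) (H : B) : dh W V (V.t ^ k * H) = dh W V H := by
  induction k with
  | zero => rw [pow_zero, one_mul]
  | succ k ih => rw [pow_succ', mul_assoc, dh_t, ih]

lemma dh_xpl (α : Fin n → ℕ) (H : B) :
    dh W V (xpl V.x α * H) = xpl W.x α * dh W V H := by
  induction α using multiindex_induction generalizing H with
  | h0 => rw [xpl_zero, xpl_zero, one_mul, one_mul]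
  | hstep i α ih =>
    rw [xpl_add_single V.x V.hxx, xpl_add_single W.x W.hxx, mul_assoc, dh_x, ih, mul_assoc]

lemma dh_dpl (β : Fin n → ℕ) (H : B) :
    dh W V (xpl V.D β * H) = xpl W.D β * dh W V H := by
  induction β using multiindex_induction generalizing H with
  | h0 => rw [xpl_zero, xpl_zero, one_mul, one_mul]
  | hstep i β ih =>
    rw [xpl_add_single V.D V.hDD, xpl_add_single W.D W.hDD, mul_assoc, dh_D, ih, mul_assoc]

lemma dh_basis_mul (u : HMon n) (H : B) :
    dh W V (V.basis u * H) = W.basis u.2 * dh W V H := by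
  obtain ⟨k, α, β⟩ := u
  rw [V.basis_eq]
  dsimp only
  rw [wmono_eq]
  dsimp only
  rw [mul_assoc, mul_assoc, dh_tpow, dh_xpl, dh_dpl, W.basis_eq, wmono_eq, mul_assoc]

lemma dh_mul (G H : B) : dh W V (G * H) = dh W V G * dh W V H := by
  induction G using basis_ind (b := V.basis) with
  | h0 => simp
  | hb v => rw [dh_basis_mul, dh_basis]
  | hadd x y hx hy => rw [add_mul, map_add, hx, hy, map_add, add_mul]
  | hsmul c x hx => rw [smul_mul_assoc, map_smul, hx, map_smul, smul_mul_assoc]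

end Main2
end Exp19
namespace Exp19
section Main3
variable {K : Type*} [Field K] {n : ℕ} {A B : Type*} [Ring A] [Algebra K A] [Ring B] [Algebra K B]
variable (W : WeylData K n A) (V : HWeylData K n B)

lemma mem_ND {P : A} {ab : WMon n} : ab ∈ ND W P ↔ W.basis.repr P ab ≠ 0 :=
  Finsupp.mem_support_iff

lemma mem_NDH {H : B} {v : HMon n} : v ∈ NDH V H ↔ V.basis.repr H v ≠ 0 :=
  Finsupp.mem_support_iff

lemma repr_sum_eq (H : B) : H = ∑ v ∈ NDH V H, V.basis.repr H v • V.basis v := by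
  conv_lhs => rw [← V.basis.linearCombination_repr H]
  rw [Finsupp.linearCombination_apply, Finsupp.sum]
  rfl

lemma wdeg_le_ordT {P : A} {ab : WMon n} (h : ab ∈ ND W P) : wdeg ab ≤ ordT W P :=
  Finset.le_sup h

lemma homog_eq_sum (P : A) :
    homog W V P = ∑ ab ∈ ND W P, W.basis.repr P ab • V.basis (ordT W P - wdeg ab, ab) := by
  unfold homog
  exact Finset.sum_congr rfl fun ab _ => by rw [V.basis_eq]

lemma repr_homog (P : A) (v : HMon n) :
    V.basis.repr (homog W V P) v =
      if v.1 = ordT W P - wdeg v.2 then W.basis.repr P v.2 else 0 := by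
  obtain ⟨k, ab⟩ := v
  rw [homog_eq_sum, map_sum, Finsupp.finset_sum_apply]
  simp only [map_smul, V.basis.repr_self, Finsupp.smul_apply, Finsupp.single_apply]
  rw [Finset.sum_eq_single ab]
  · by_cases h : (k : ℕ) = ordT W P - wdeg ab
    · rw [if_pos (by rw [h]), if_pos h, smul_eq_mul, mul_one]
    · rw [if_neg (fun hh => h (congrArg Prod.fst hh).symm), if_neg h, smul_zero]
  · intro b _ hb
    rw [if_neg (fun hh => hb (congrArg Prod.snd hh)), smul_zero]
  · intro hab
    rw [Finsupp.notMem_support_iff.mp hab]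
    simp

lemma mem_NDH_homog (P : A) (v : HMon n) :
    v ∈ NDH V (homog W V P) ↔ v.2 ∈ ND W P ∧ v.1 = ordT W P - wdeg v.2 := by
  rw [mem_NDH, repr_homog]
  by_cases h : v.1 = ordT W P - wdeg v.2
  · simp [h, mem_ND]
  · simp [h]

lemma isHomog_iff {H : B} {d : ℕ} :
    IsHomogOfDeg V H d ↔ ∀ v : HMon n, V.basis.repr H v ≠ 0 → hdeg v = d := by
  constructor
  · intro h v hv
    exact h v ((mem_NDH V).mpr hv)
  · intro h v hv
    exact h v ((mem_NDH V).mp hv)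

lemma isHomog_zero (d : ℕ) : IsHomogOfDeg V 0 d := by
  intro v hv
  simp [NDH] at hv

lemma isHomog_add {H G : B} {d : ℕ} (hH : IsHomogOfDeg V H d) (hG : IsHomogOfDeg V G d) :
    IsHomogOfDeg V (H + G) d := by
  rw [isHomog_iff] at *
  intro v hv
  rw [map_add, Finsupp.add_apply] at hv
  rcases ne_or_eq (V.basis.repr H v) 0 with h | h
  · exact hH v h
  · exact hG v (by rw [h, zero_add] at hv; exact hv)

lemma isHomog_smul (c : K) {H : B} {d : ℕ} (hH : IsHomogOfDeg V H d) :
    IsHomogOfDeg V (c • H) d := by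
  rw [isHomog_iff] at *
  intro v hv
  rw [map_smul, Finsupp.smul_apply] at hv
  exact hH v fun h => hv (by rw [h, smul_zero])

lemma isHomog_nsmul (m : ℕ) {H : B} {d : ℕ} (hH : IsHomogOfDeg V H d) :
    IsHomogOfDeg V (m • H) d := by
  rw [isHomog_iff] at *
  intro v hv
  rw [map_nsmul, Finsupp.smul_apply] at hv
  exact hH v fun h => hv (by rw [h, smul_zero])

lemma isHomog_sum {ι : Type*} {s : Finset ι} {f : ι → B} {d : ℕ}
    (h : ∀ i ∈ s, IsHomogOfDeg V (f i) d) : IsHomogOfDeg V (∑ i ∈ s, f i) d := by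
  classical
  induction s using Finset.induction_on with
  | empty => simpa using isHomog_zero V d
  | insert a s hni ih =>
    rw [Finset.sum_insert hni]
    exact isHomog_add V (h _ (Finset.mem_insert_self _ _))
      (ih fun i hi => h i (Finset.mem_insert_of_mem hi))

lemma isHomog_basis {v : HMon n} {d : ℕ} (h : hdeg v = d) :
    IsHomogOfDeg V (V.basis v) d := by
  rw [isHomog_iff]
  intro u hu
  rw [V.basis.repr_self, Finsupp.single_apply] at hu
  rcases eq_or_ne v u with rfl | hne
  · exact h
  · exact absurd (if_neg hne) hu

lemma homog_isHomog (P : A) : IsHomogOfDeg V (homog W V P) (ordT W P) := by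
  intro v hv
  rw [mem_NDH_homog] at hv
  rw [hv.2]
  exact Nat.sub_add_cancel (wdeg_le_ordT W hv.1)

lemma dh_homog (P : A) : dh W V (homog W V P) = P := by
  rw [homog_eq_sum, map_sum]
  simp only [map_smul, dh_basis]
  conv_rhs => rw [← W.basis.linearCombination_repr P]
  rw [Finsupp.linearCombination_apply, Finsupp.sum]
  rfl

end Main3
end Exp19
namespace Exp19
section Main4
variable {K : Type*} [Field K] {n : ℕ} {A B : Type*} [Ring A] [Algebra K A] [Ring B] [Algebra K B]
variable (W : WeylData K n A) (V : HWeylData K n B)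

lemma isHomog_mul_left_of_basis {g : B} {e : ℕ}
    (hg : ∀ v : HMon n, IsHomogOfDeg V (g * V.basis v) (e + hdeg v)) {H : B} {d : ℕ}
    (hH : IsHomogOfDeg V H d) : IsHomogOfDeg V (g * H) (e + d) := by
  rw [repr_sum_eq V H, Finset.mul_sum]
  apply isHomog_sum
  intro v hv
  rw [Algebra.mul_smul_comm]
  have hdv : hdeg v = d := hH v hv
  exact isHomog_smul V _ (by rw [← hdv]; exact hg v)

lemma isHomog_t_mul {H : B} {d : ℕ} (hH : IsHomogOfDeg V H d) :
    IsHomogOfDeg V (V.t * H) (1 + d) := by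
  apply isHomog_mul_left_of_basis V (fun v => ?_) hH
  rw [bm_t]
  exact isHomog_basis V (by simp [hdeg]; omega)

lemma isHomog_x_mul (i : Fin n) {H : B} {d : ℕ} (hH : IsHomogOfDeg V H d) :
    IsHomogOfDeg V (V.x i * H) (1 + d) := by
  apply isHomog_mul_left_of_basis V (fun v => ?_) hH
  obtain ⟨k, α, β⟩ := v
  rw [bm_x]
  apply isHomog_basis V
  simp only [hdeg, wdeg, sum_add_single]
  omega

lemma isHomog_D_mul (i : Fin n) {H : B} {d : ℕ} (hH : IsHomogOfDeg V H d) :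
    IsHomogOfDeg V (V.D i * H) (1 + d) := by
  apply isHomog_mul_left_of_basis V (fun v => ?_) hH
  obtain ⟨k, α, β⟩ := v
  rw [bm_D]
  apply isHomog_add V
  · apply isHomog_basis V
    simp only [hdeg, wdeg, sum_add_single]
    omega
  · rcases eq_or_ne (α i) 0 with h | h
    · rw [h, zero_smul]
      exact isHomog_zero V _
    · apply isHomog_nsmul V
      apply isHomog_basis V
      simp only [hdeg, wdeg, sum_sub_single h]
      have h1 : 1 ≤ ∑ j, α j :=
        le_trans (Nat.one_le_iff_ne_zero.mpr h) (Finset.single_le_sum (fun j _ => Nat.zero_le _) (Finset.mem_univ i))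
      omega

lemma isHomog_tpow_mul (k : ℕ) {H : B} {d : ℕ} (hH : IsHomogOfDeg V H d) :
    IsHomogOfDeg V (V.t ^ k * H) (k + d) := by
  induction k with
  | zero => simpa using hH
  | succ k ih =>
    have h2 : IsHomogOfDeg V (V.t * (V.t ^ k * H)) (1 + (k + d)) := isHomog_t_mul V ih
    rw [← mul_assoc, ← pow_succ'] at h2
    rw [show k + 1 + d = 1 + (k + d) from by omega]
    exact h2

lemma isHomog_xpl_mul (α : Fin n → ℕ) {H : B} {d : ℕ} (hH : IsHomogOfDeg V H d) :
    IsHomogOfDeg V (xpl V.x α * H) ((∑ j, α j) + d) := by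
  induction α using multiindex_induction generalizing H d with
  | h0 => simpa [xpl_zero] using hH
  | hstep i α ih =>
    have h2 := isHomog_x_mul V i (ih hH)
    rw [← mul_assoc, ← xpl_add_single V.x V.hxx] at h2
    rw [show (∑ j, (α + Pi.single i 1 : Fin n → ℕ) j) + d = 1 + ((∑ j, α j) + d) from by
      rw [sum_add_single]; omega]
    exact h2

lemma isHomog_dpl_mul (β : Fin n → ℕ) {H : B} {d : ℕ} (hH : IsHomogOfDeg V H d) :
    IsHomogOfDeg V (xpl V.D β * H) ((∑ j, β j) + d) := by
  induction β using multiindex_induction generalizing H d with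
  | h0 => simpa [xpl_zero] using hH
  | hstep i β ih =>
    have h2 := isHomog_D_mul V i (ih hH)
    rw [← mul_assoc, ← xpl_add_single V.D V.hDD] at h2
    rw [show (∑ j, (β + Pi.single i 1 : Fin n → ℕ) j) + d = 1 + ((∑ j, β j) + d) from by
      rw [sum_add_single]; omega]
    exact h2

lemma isHomog_basis_mul (u : HMon n) {H : B} {d : ℕ} (hH : IsHomogOfDeg V H d) :
    IsHomogOfDeg V (V.basis u * H) (hdeg u + d) := by
  obtain ⟨k, α, β⟩ := u
  rw [V.basis_eq]
  have h1 := isHomog_tpow_mul V k (isHomog_xpl_mul V α (isHomog_dpl_mul V β hH))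
  rw [wmono_eq]
  dsimp only
  rw [mul_assoc, mul_assoc]
  rw [show hdeg (k, (α, β)) + d = k + ((∑ j, α j) + ((∑ j, β j) + d)) from by
    simp only [hdeg, wdeg]; omega]
  exact h1

lemma isHomog_mul {G H : B} {d₁ d₂ : ℕ} (hG : IsHomogOfDeg V G d₁)
    (hH : IsHomogOfDeg V H d₂) : IsHomogOfDeg V (G * H) (d₁ + d₂) := by
  rw [repr_sum_eq V G, Finset.sum_mul]
  apply isHomog_sum
  intro v hv
  rw [smul_mul_assoc]
  apply isHomog_smul
  have hdv : hdeg v = d₁ := hG v hv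
  rw [← hdv]
  exact isHomog_basis_mul V v hH

/-- Projection onto the degree-`d` homogeneous component. -/
noncomputable def comp (d : ℕ) : B →ₗ[K] B :=
  V.basis.constr K fun v => if hdeg v = d then V.basis v else 0

lemma comp_basis (d : ℕ) (v : HMon n) :
    comp V d (V.basis v) = if hdeg v = d then V.basis v else 0 :=
  V.basis.constr_basis K _ v

lemma repr_comp (d : ℕ) (H : B) (u : HMon n) :
    V.basis.repr (comp V d H) u = if hdeg u = d then V.basis.repr H u else 0 := by
  induction H using basis_ind (b := V.basis) with
  | h0 => simp
  | hb v =>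
    rw [comp_basis]
    by_cases hv : hdeg v = d
    · simp only [if_pos hv, V.basis.repr_self, Finsupp.single_apply]
      rcases eq_or_ne v u with rfl | hne
      · simp [hv]
      · simp [hne]
    · simp only [if_neg hv, map_zero, Finsupp.coe_zero, Pi.zero_apply,
        V.basis.repr_self, Finsupp.single_apply]
      rcases eq_or_ne v u with rfl | hne
      · simp [hv]
      · simp [hne]
  | hadd x y hx hy =>
    simp only [map_add, Finsupp.add_apply, hx, hy]
    by_cases h : hdeg u = d <;> simp [h]
  | hsmul c x hx =>
    simp only [map_smul, Finsupp.smul_apply, hx]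
    by_cases h : hdeg u = d <;> simp [h]

lemma comp_isHomog (d : ℕ) (H : B) : IsHomogOfDeg V (comp V d H) d := by
  rw [isHomog_iff]
  intro v hv
  rw [repr_comp] at hv
  by_cases h : hdeg v = d
  · exact h
  · exact absurd (if_neg h) hv

lemma comp_of_isHomog_self {H : B} {d : ℕ} (hH : IsHomogOfDeg V H d) :
    comp V d H = H := by
  apply V.basis.repr.injective
  ext u
  rw [repr_comp]
  by_cases h : hdeg u = d
  · rw [if_pos h]
  · rw [if_neg h]
    rcases eq_or_ne (V.basis.repr H u) 0 with h0 | h0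
    · rw [h0]
    · exact absurd ((isHomog_iff V).mp hH u h0) h

lemma comp_of_isHomog_ne {H : B} {e d : ℕ} (hH : IsHomogOfDeg V H e) (hne : e ≠ d) :
    comp V d H = 0 := by
  apply V.basis.repr.injective
  ext u
  rw [repr_comp, map_zero]
  by_cases h : hdeg u = d
  · rw [if_pos h]
    rcases eq_or_ne (V.basis.repr H u) 0 with h0 | h0
    · rw [h0]; simp
    · exact absurd (((isHomog_iff V).mp hH u h0).symm.trans h) hne
  · rw [if_neg h]; simp

lemma comp_mul_homog {H₀ : B} {d₀ : ℕ} (hH₀ : IsHomogOfDeg V H₀ d₀) (e : ℕ) (G : B) :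
    comp V (e + d₀) (G * H₀) = comp V e G * H₀ := by
  induction G using basis_ind (b := V.basis) with
  | h0 => rw [zero_mul, map_zero, map_zero, zero_mul]
  | hb u =>
    rw [comp_basis]
    by_cases h : hdeg u = e
    · rw [if_pos h, comp_of_isHomog_self V (by rw [← h]; exact isHomog_basis_mul V u hH₀)]
    · rw [if_neg h, zero_mul,
        comp_of_isHomog_ne V (isHomog_basis_mul V u hH₀) (by omega)]
  | hadd x y hx hy => rw [add_mul, map_add, hx, hy, map_add, add_mul]
  | hsmul c x hx => rw [smul_mul_assoc, map_smul, hx, map_smul, smul_mul_assoc]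

lemma comp_mul_homog_lt {H₀ : B} {d₀ : ℕ} (hH₀ : IsHomogOfDeg V H₀ d₀) {d : ℕ}
    (hd : d < d₀) (G : B) : comp V d (G * H₀) = 0 := by
  induction G using basis_ind (b := V.basis) with
  | h0 => rw [zero_mul, map_zero]
  | hb u => exact comp_of_isHomog_ne V (isHomog_basis_mul V u hH₀) (by omega)
  | hadd x y hx hy => rw [add_mul, map_add, hx, hy, add_zero]
  | hsmul c x hx => rw [smul_mul_assoc, map_smul, hx, smul_zero]

end Main4
end Exp19
namespace Exp19
section Main5
variable {K : Type*} [Field K] {n : ℕ} {A B : Type*} [Ring A] [Algebra K A] [Ring B] [Algebra K B]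
variable (W : WeylData K n A) (V : HWeylData K n B)
variable (δ : A → WithBot ℤ) (r : WMon n → WMon n → Prop)

lemma repr_dh_of_isHomog {H : B} {d : ℕ} (hH : IsHomogOfDeg V H d) (ab : WMon n) :
    W.basis.repr (dh W V H) ab = V.basis.repr H (d - wdeg ab, ab) := by
  conv_lhs => rw [repr_sum_eq V H]
  rw [map_sum, map_sum, Finsupp.finset_sum_apply]
  simp only [map_smul, dh_basis, W.basis.repr_self, Finsupp.smul_apply,
    Finsupp.single_apply, smul_eq_mul]
  rw [Finset.sum_eq_single ((d - wdeg ab, ab) : HMon n)]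
  · rw [if_pos rfl, mul_one]
  · intro b hb hbne
    by_cases h2 : b.2 = ab
    · exfalso
      apply hbne
      have h1 := hH b hb
      have : b.1 = d - wdeg ab := by rw [← h2]; omega
      exact Prod.ext this h2
    · rw [if_neg h2, mul_zero]
  · intro hmem
    rw [Finsupp.notMem_support_iff.mp hmem, zero_mul]

lemma mem_ND_dh_of_isHomog {H : B} {d : ℕ} (hH : IsHomogOfDeg V H d) (ab : WMon n) :
    ab ∈ ND W (dh W V H) ↔ ((d - wdeg ab, ab) : HMon n) ∈ NDH V H := by
  rw [mem_ND, mem_NDH, repr_dh_of_isHomog W V hH]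

lemma NDH_elt_eq {H : B} {d : ℕ} (hH : IsHomogOfDeg V H d) {v : HMon n}
    (hv : v ∈ NDH V H) : v = (d - wdeg v.2, v.2) := by
  have h1 := hH v hv
  exact Prod.ext (by omega) rfl

lemma dh_ne_zero_of_isHomog {H : B} {d : ℕ} (hH : IsHomogOfDeg V H d) (hne : H ≠ 0) :
    dh W V H ≠ 0 := by
  obtain ⟨v, hv⟩ := Finsupp.support_nonempty_iff.mpr
    (fun h : V.basis.repr H = 0 => hne (by
      have := congrArg V.basis.repr.symm h
      simpa using this))
  intro h0
  have h1 : v.2 ∈ ND W (dh W V H) := by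
    rw [mem_ND_dh_of_isHomog W V hH, ← NDH_elt_eq V hH hv]
    exact hv
  rw [h0] at h1
  simp [ND] at h1

lemma isExpH_to_isExp {H : B} {d : ℕ} (hH : IsHomogOfDeg V H d) {E : HMon n}
    (hE : IsExpH V (rT W δ r) H E) : IsExp W (rdelta W δ r) (dh W V H) E.2 := by
  have hEmem : E ∈ NDH V H := hE.1
  constructor
  · rw [mem_ND_dh_of_isHomog W V hH, ← NDH_elt_eq V hH hEmem]
    exact hEmem
  · intro f hf hfne
    have hF : ((d - wdeg f, f) : HMon n) ∈ NDH V H := by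
      rw [← mem_ND_dh_of_isHomog W V hH]
      exact hf
    have hFne : ((d - wdeg f, f) : HMon n) ≠ E := fun h => hfne (congrArg Prod.snd h)
    rcases hE.2 _ hF hFne with hlt | ⟨_, hrd⟩
    · exfalso
      have h1 : hdeg ((d - wdeg f, f) : HMon n) = d := hH _ hF
      have h2 : hdeg E = d := hH _ hEmem
      omega
    · exact hrd

lemma isExp_to_isExpH {H : B} {d : ℕ} (hH : IsHomogOfDeg V H d) {e : WMon n}
    (hQ : IsExp W (rdelta W δ r) (dh W V H) e) :
    IsExpH V (rT W δ r) H ((d - wdeg e, e) : HMon n) := by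
  have hEmem : ((d - wdeg e, e) : HMon n) ∈ NDH V H := by
    rw [← mem_ND_dh_of_isHomog W V hH]
    exact hQ.1
  refine ⟨hEmem, fun F hF hFne => ?_⟩
  have hF2 : F.2 ∈ ND W (dh W V H) := by
    rw [mem_ND_dh_of_isHomog W V hH, ← NDH_elt_eq V hH hF]
    exact hF
  have hF2ne : F.2 ≠ e := by
    intro h
    apply hFne
    rw [NDH_elt_eq V hH hF, h]
  right
  constructor
  · have h1 := hH _ hF
    have h2 := hH _ hEmem
    simp only [hdeg] at *
    omega
  · exact hQ.2 F.2 hF2 hF2ne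

lemma NDH_comp_subset (d : ℕ) (H : B) : NDH V (comp V d H) ⊆ NDH V H := by
  intro v hv
  rw [mem_NDH, repr_comp] at hv
  rw [mem_NDH]
  by_cases h : hdeg v = d
  · rw [if_pos h] at hv; exact hv
  · exact absurd (if_neg h) hv

lemma comp_mem_ideal {T : Set B} (hT : ∀ s ∈ T, ∃ d₀, IsHomogOfDeg V s d₀) {H : B}
    (hH : H ∈ Ideal.span T) (d : ℕ) : comp V d H ∈ Ideal.span T := by
  rw [Ideal.span, Submodule.mem_span_set] at hH
  obtain ⟨c, hsupp, rfl⟩ := hH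
  rw [Finsupp.sum, map_sum]
  apply Submodule.sum_mem
  intro s hs
  obtain ⟨d₀, hd₀⟩ := hT s (hsupp hs)
  rw [smul_eq_mul]
  rcases le_or_gt d₀ d with hle | hlt
  · rw [show d = (d - d₀) + d₀ from (Nat.sub_add_cancel hle).symm, comp_mul_homog V hd₀]
    exact Ideal.mul_mem_left _ _ (Ideal.subset_span (hsupp hs))
  · rw [comp_mul_homog_lt V hd₀ hlt]
    exact zero_mem _

lemma dh_mem_ideal {T : Set B} {I : Ideal A} (hT : ∀ s ∈ T, dh W V s ∈ I) {H : B}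
    (hH : H ∈ Ideal.span T) : dh W V H ∈ I := by
  refine Submodule.span_induction (fun s hs => hT s hs) (by simp) ?_ ?_ hH
  · intro x y _ _ hx hy
    rw [map_add]
    exact add_mem hx hy
  · intro a x _ hx
    rw [smul_eq_mul, dh_mul]
    exact Ideal.mul_mem_left _ _ hx

lemma exists_homog_rep {m : ℕ} (P : Fin m → A) {Q : A}
    (hQ : Q ∈ Ideal.span (Set.range P)) :
    ∃ H ∈ Ideal.span (Set.range fun i => homog W V (P i)),
      ∃ d, IsHomogOfDeg V H d ∧ dh W V H = Q := by
  let J := Ideal.span (Set.range fun i => homog W V (P i))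
  let S : Ideal A :=
    { carrier := {Q : A | ∃ H ∈ J, ∃ d, IsHomogOfDeg V H d ∧ dh W V H = Q}
      zero_mem' := ⟨0, zero_mem _, 0, isHomog_zero V 0, map_zero _⟩
      add_mem' := by
        rintro a b ⟨H₁, hm₁, d₁, hh₁, he₁⟩ ⟨H₂, hm₂, d₂, hh₂, he₂⟩
        refine ⟨V.t ^ (max d₁ d₂ - d₁) * H₁ + V.t ^ (max d₁ d₂ - d₂) * H₂,
          add_mem (Ideal.mul_mem_left _ _ hm₁) (Ideal.mul_mem_left _ _ hm₂),
          max d₁ d₂, ?_, ?_⟩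
        · apply isHomog_add
          · have h := isHomog_tpow_mul V (max d₁ d₂ - d₁) hh₁
            rwa [show (max d₁ d₂ - d₁) + d₁ = max d₁ d₂ from by omega] at h
          · have h := isHomog_tpow_mul V (max d₁ d₂ - d₂) hh₂
            rwa [show (max d₁ d₂ - d₂) + d₂ = max d₁ d₂ from by omega] at h
        · rw [map_add, dh_tpow, dh_tpow, he₁, he₂]
      smul_mem' := by
        rintro c x ⟨H, hm, d, hh, he⟩
        refine ⟨homog W V c * H, Ideal.mul_mem_left _ _ hm, ordT W c + d,
          isHomog_mul V (homog_isHomog W V c) hh, ?_⟩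
        rw [dh_mul, dh_homog, he, smul_eq_mul] }
  have hle : Ideal.span (Set.range P) ≤ S := by
    apply Ideal.span_le.mpr
    rintro _ ⟨i, rfl⟩
    exact ⟨homog W V (P i), Ideal.subset_span ⟨i, rfl⟩, ordT W (P i),
      homog_isHomog W V _, dh_homog W V _⟩
  exact hle hQ

end Main5
end Exp19
/-- if `I` is the nonzero left ideal of `A_n(K)` generated by `P₁,…,P_m`,
`Ĩ` the left ideal of `A_n[t]` generated by `h(P₁),…,h(P_m)`, and `h(I)` the left ideal
generated by all `h(P)`, `P ∈ I`, then `π(Exp_δ(Ĩ)) = Exp_δ(I) = π(Exp_δ(h(I)))`. -/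
theorem exp_homogenized_ideal (K : Type*) [Field K] (n : ℕ) (A B : Type*) [Ring A]
    [Algebra K A] [Ring B] [Algebra K B] (W : WeylData K n A) (V : HWeylData K n B)
    (δ : A → WithBot ℤ) (hδ : IsAdmissible W δ)
    (r : WMon n → WMon n → Prop) (hr : WellMonomialOrdering r)
    (m : ℕ) (P : Fin m → A) (I : Ideal A) (hI : I = Ideal.span (Set.range P))
    (hIne : I ≠ ⊥) :
    {v : WMon n | ∃ E : HMon n, v = E.2 ∧
        ∃ H ∈ Ideal.span (Set.range fun i => homog W V (P i)), H ≠ 0 ∧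
          IsExpH V (rT W δ r) H E} =
      {v : WMon n | ∃ Q ∈ I, Q ≠ 0 ∧ IsExp W (rdelta W δ r) Q v} ∧
    {v : WMon n | ∃ E : HMon n, v = E.2 ∧
        ∃ H ∈ Ideal.span {H : B | ∃ Q ∈ I, H = homog W V Q}, H ≠ 0 ∧
          IsExpH V (rT W δ r) H E} =
      {v : WMon n | ∃ Q ∈ I, Q ≠ 0 ∧ IsExp W (rdelta W δ r) Q v} := by
  
  classical
  have key : ∀ (T : Set B), (∀ s ∈ T, ∃ d₀, IsHomogOfDeg V s d₀) →
      (∀ s ∈ T, Exp19.dh W V s ∈ I) →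
      {v : WMon n | ∃ E : HMon n, v = E.2 ∧
        ∃ H ∈ Ideal.span T, H ≠ 0 ∧ IsExpH V (rT W δ r) H E} ⊆
      {v : WMon n | ∃ Q ∈ I, Q ≠ 0 ∧ IsExp W (rdelta W δ r) Q v} := by
    rintro T hT hTI v ⟨E, rfl, H, hHmem, hHne, hExp⟩
    have hEmemH : E ∈ NDH V H := hExp.1
    have hEmem : E ∈ NDH V (Exp19.comp V (hdeg E) H) := by
      rw [Exp19.mem_NDH, Exp19.repr_comp, if_pos rfl]
      exact (Exp19.mem_NDH V).mp hEmemH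
    have hcne : Exp19.comp V (hdeg E) H ≠ 0 := by
      intro h
      rw [h] at hEmem
      simp [NDH] at hEmem
    have hhom := Exp19.comp_isHomog V (hdeg E) H
    have hExp' : IsExpH V (rT W δ r) (Exp19.comp V (hdeg E) H) E :=
      ⟨hEmem, fun F hF hne => hExp.2 F (Exp19.NDH_comp_subset V (hdeg E) H hF) hne⟩
    exact ⟨Exp19.dh W V (Exp19.comp V (hdeg E) H),
      Exp19.dh_mem_ideal W V hTI (Exp19.comp_mem_ideal V hT hHmem (hdeg E)),
      Exp19.dh_ne_zero_of_isHomog W V hhom hcne, Exp19.isExpH_to_isExp W V δ r hhom hExp'⟩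
  constructor
  · ext v
    simp only [Set.mem_setOf_eq]
    constructor
    · intro hv
      exact key (Set.range fun i => homog W V (P i))
        (by rintro s ⟨i, rfl⟩; exact ⟨_, Exp19.homog_isHomog W V _⟩)
        (by rintro s ⟨i, rfl⟩; rw [Exp19.dh_homog]; exact hI ▸ Ideal.subset_span ⟨i, rfl⟩) hv
    · rintro ⟨Q, hQI, hQne, hQexp⟩
      obtain ⟨H, hm, d, hh, he⟩ := Exp19.exists_homog_rep W V P (hI ▸ hQI)
      have hHne : H ≠ 0 := fun h0 => hQne (by rw [← he, h0, map_zero])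
      refine ⟨((d - wdeg v, v) : HMon n), rfl, H, hm, hHne, ?_⟩
      exact Exp19.isExp_to_isExpH W V δ r hh (by rw [he]; exact hQexp)
  · ext v
    simp only [Set.mem_setOf_eq]
    constructor
    · intro hv
      exact key {H : B | ∃ Q ∈ I, H = homog W V Q}
        (by rintro s ⟨Q, hQ, rfl⟩; exact ⟨_, Exp19.homog_isHomog W V _⟩)
        (by rintro s ⟨Q, hQ, rfl⟩; rw [Exp19.dh_homog]; exact hQ) hv
    · rintro ⟨Q, hQI, hQne, hQexp⟩
      have hne : homog W V Q ≠ 0 := fun h0 => hQne (by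
        rw [← Exp19.dh_homog W V Q, h0, map_zero])
      exact ⟨((ordT W Q - wdeg v, v) : HMon n), rfl, homog W V Q,
        Ideal.subset_span ⟨Q, hQI, rfl⟩, hne,
        Exp19.isExp_to_isExpH W V δ r (Exp19.homog_isHomog W V Q)
          (by rw [Exp19.dh_homog]; exact hQexp)⟩
end
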